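/- arXiv:1803.04516 — 10 statements merged into one kernel-verified Lean document; each statement's English description precedes it below -/
import Mathlib

section
/- Let n ≥ 2, b ∈ {1, −1}, c ≥ 0 and d be real with λ = c − d ≠ 0, and let Q be the corresponding n×n tridiagonal matrix. Then Q is invertible if and only if d β_{n−1} − β_{n−2} ≠ 0. Moreover, if d β_{n−1} − β_{n−2} ≠ 0, then Q^{-1} is symmetric and for all 1 ≤ i ≤ j ≤ n one has (Q^{-1})_{ij} = u_i v_j, where u_i = b^{i−1} β_{i−1} and v_j = b^{j−1} β_{n−j} / (d β_{n−1} − β_{n−2}). -/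
/-- The sequence β₀ = 1, β₁ = d, βᵢ = c βᵢ₋₁ − βᵢ₋₂. -/
noncomputable def beta (c d : ℝ) : ℕ → ℝ
  | 0 => 1
  | 1 => d
  | i + 2 => c * beta c d (i + 1) - beta c d i

/-- The n×n symmetric tridiagonal matrix with diagonal (d, c, …, c, d) and
off-diagonal entries −b. -/
noncomputable def triQ (n : ℕ) (b c d : ℝ) : Matrix (Fin n) (Fin n) ℝ :=
  Matrix.of fun i j =>
    if i = j then (if (i : ℕ) = 0 ∨ (i : ℕ) = n - 1 then d else c)
    else if (i : ℕ) + 1 = (j : ℕ) ∨ (j : ℕ) + 1 = (i : ℕ) then -b else 0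

lemma beta_zero (c d : ℝ) : beta c d 0 = 1 := rfl
lemma beta_one (c d : ℝ) : beta c d 1 = d := rfl
lemma beta_rec (c d : ℝ) (i : ℕ) :
    beta c d (i + 2) = c * beta c d (i + 1) - beta c d i := rfl

/-- Casoratian-type identity for β. -/
lemma beta_F (c d : ℝ) (q : ℕ) : ∀ p : ℕ,
    beta c d (p + 1) * beta c d (q + 1) - beta c d p * beta c d q
      = d * beta c d (p + q + 1) - beta c d (p + q) := by
  induction q with
  | zero =>
    intro p
    show beta c d (p + 1) * beta c d 1 - beta c d p * beta c d 0
      = d * beta c d (p + 1) - beta c d p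
    rw [beta_one, beta_zero]; ring
  | succ q ih =>
    intro p
    have h := ih (p + 1)
    rw [show p + 1 + q = p + q + 1 from by omega] at h
    have e1 : beta c d (p + 2) = c * beta c d (p + 1) - beta c d p := beta_rec c d p
    have e2 : beta c d (q + 2) = c * beta c d (q + 1) - beta c d q := beta_rec c d q
    show beta c d (p + 1) * beta c d (q + 2) - beta c d p * beta c d (q + 1)
      = d * beta c d (p + q + 2) - beta c d (p + q + 1)
    rw [show p + q + 2 = p + q + 1 + 1 from by omega]
    linear_combination h + beta c d (p + 1) * e2 - beta c d (q + 1) * e1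

/-- Candidate entries of the inverse. -/
noncomputable def mfun (n : ℕ) (b c d D : ℝ) (p q : ℕ) : ℝ :=
  b ^ p * b ^ q * beta c d (min p q) * beta c d (n - 1 - max p q) / D

/-- Row sum of the tridiagonal matrix against a sequence. -/
lemma triQ_row (n : ℕ) (b c d : ℝ) (x : ℕ → ℝ) (i : Fin n) :
    ∑ k : Fin n, triQ n b c d i k * x (k : ℕ)
      = (if (i : ℕ) = 0 ∨ (i : ℕ) = n - 1 then d else c) * x (i : ℕ)
        - (if (i : ℕ) + 1 < n then b * x ((i : ℕ) + 1) else 0)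
        - (if 0 < (i : ℕ) then b * x ((i : ℕ) - 1) else 0) := by
  have hsp : ∀ k : Fin n, triQ n b c d i k * x (k : ℕ)
      = (if i = k then (if (i : ℕ) = 0 ∨ (i : ℕ) = n - 1 then d else c) * x (i : ℕ) else 0)
        + ((if (i : ℕ) + 1 = (k : ℕ) then -(b * x ((i : ℕ) + 1)) else 0)
        + (if (k : ℕ) + 1 = (i : ℕ) then -(b * x ((i : ℕ) - 1)) else 0)) := by
    intro k
    simp only [triQ, Matrix.of_apply]
    by_cases h1 : i = k
    · subst h1
      split_ifs <;> first | ring1 | (exfalso; omega) | simp_all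
    · have c0 : ¬(i = k) := h1
      by_cases h2 : (i : ℕ) + 1 = (k : ℕ)
      · have c3 : ¬((k : ℕ) + 1 = (i : ℕ)) := by omega
        rw [if_neg c0, if_pos (Or.inl h2 : (i : ℕ) + 1 = (k : ℕ) ∨ (k : ℕ) + 1 = (i : ℕ)),
          if_neg c0, if_pos h2, if_neg c3, show ((k : ℕ)) = (i : ℕ) + 1 from h2.symm]
        ring
      · by_cases h3 : (k : ℕ) + 1 = (i : ℕ)
        · rw [if_neg c0, if_pos (Or.inr h3 : (i : ℕ) + 1 = (k : ℕ) ∨ (k : ℕ) + 1 = (i : ℕ)),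
            if_neg c0, if_neg h2, if_pos h3, show ((k : ℕ)) = (i : ℕ) - 1 from by omega]
          ring
        · have c4 : ¬((i : ℕ) + 1 = (k : ℕ) ∨ (k : ℕ) + 1 = (i : ℕ)) := by tauto
          rw [if_neg c0, if_neg c4, if_neg c0, if_neg h2, if_neg h3]
          ring
  rw [Finset.sum_congr rfl fun k _ => hsp k, Finset.sum_add_distrib, Finset.sum_add_distrib]
  have S1 : ∑ k : Fin n,
      (if i = k then (if (i : ℕ) = 0 ∨ (i : ℕ) = n - 1 then d else c) * x (i : ℕ) else 0)
      = (if (i : ℕ) = 0 ∨ (i : ℕ) = n - 1 then d else c) * x (i : ℕ) := by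
    rw [Finset.sum_ite_eq]; simp
  have S2 : ∑ k : Fin n, (if (i : ℕ) + 1 = (k : ℕ) then -(b * x ((i : ℕ) + 1)) else 0)
      = if (i : ℕ) + 1 < n then -(b * x ((i : ℕ) + 1)) else 0 := by
    by_cases hin : (i : ℕ) + 1 < n
    · rw [if_pos hin]
      rw [Finset.sum_eq_single_of_mem (⟨(i : ℕ) + 1, hin⟩ : Fin n) (Finset.mem_univ _)
        (fun k _ hk => if_neg (fun hc => hk (Fin.ext (show (k : ℕ) = (i : ℕ) + 1 from by omega))))]
      exact if_pos rfl
    · rw [if_neg hin]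
      exact Finset.sum_eq_zero fun k _ => if_neg (by have := k.isLt; omega)
  have S3 : ∑ k : Fin n, (if (k : ℕ) + 1 = (i : ℕ) then -(b * x ((i : ℕ) - 1)) else 0)
      = if 0 < (i : ℕ) then -(b * x ((i : ℕ) - 1)) else 0 := by
    by_cases hin : 0 < (i : ℕ)
    · rw [if_pos hin]
      rw [Finset.sum_eq_single_of_mem (⟨(i : ℕ) - 1, by omega⟩ : Fin n) (Finset.mem_univ _)
        (fun k _ hk => if_neg (fun hc => hk (Fin.ext (show (k : ℕ) = (i : ℕ) - 1 from by omega))))]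
      exact if_pos (show (i : ℕ) - 1 + 1 = (i : ℕ) from by omega)
    · rw [if_neg hin]
      exact Finset.sum_eq_zero fun k _ => if_neg (by omega)
  rw [S1, S2, S3]
  split_ifs <;> ring

lemma pow_self_mul_self {b : ℝ} (hb2 : b * b = 1) (k : ℕ) : b ^ k * b ^ k = 1 := by
  rw [← mul_pow, hb2, one_pow]

/-- The key entrywise identity: row combination of the candidate inverse. -/
lemma entry_eq (n : ℕ) (hn : 2 ≤ n) (b c d : ℝ) (hb2 : b * b = 1) (D : ℝ)
    (hDval : D = d * beta c d (n - 1) - beta c d (n - 2)) (hD0 : D ≠ 0)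
    (p q : ℕ) (hp : p < n) (hq : q < n) :
    (if p = 0 ∨ p = n - 1 then d else c) * mfun n b c d D p q
      - (if p + 1 < n then b * mfun n b c d D (p + 1) q else 0)
      - (if 0 < p then b * mfun n b c d D (p - 1) q else 0)
    = if p = q then 1 else 0 := by
  subst hDval
  rcases lt_trichotomy p q with hpq | rfl | hpq
  · -- p < q
    have hne : ¬(p = q) := by omega
    have h2 : p + 1 < n := by omega
    rw [if_neg hne, if_pos h2]
    simp only [mfun, min_eq_left (show p ≤ q from by omega),
      max_eq_right (show p ≤ q from by omega),
      min_eq_left (show p + 1 ≤ q from by omega),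
      max_eq_right (show p + 1 ≤ q from by omega)]
    rcases Nat.eq_zero_or_pos p with rfl | hp0
    · rw [if_pos (Or.inl rfl : (0 : ℕ) = 0 ∨ 0 = n - 1), if_neg (show ¬(0 < 0) from by omega)]
      simp only [pow_zero, zero_add, pow_one, beta_zero, beta_one]
      field_simp
      linear_combination (-(d * b ^ q * beta c d (n - 1 - q))) * hb2
    · rw [if_neg (show ¬(p = 0 ∨ p = n - 1) from by omega), if_pos hp0]
      obtain ⟨p', rfl⟩ : ∃ t, p = t + 1 := ⟨p - 1, by omega⟩
      simp only [Nat.add_sub_cancel,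
        min_eq_left (show p' ≤ q from by omega), max_eq_right (show p' ≤ q from by omega)]
      have e : beta c d (p' + 1 + 1) = c * beta c d (p' + 1) - beta c d p' := beta_rec c d p'
      rw [pow_succ' b (p' + 1), pow_succ' b p']
      field_simp
      linear_combination (-(b * b ^ p' * b ^ q * beta c d (n - 1 - q))) * e
        + (-(b * b ^ p' * b ^ q * beta c d (n - 1 - q) * beta c d (p' + 1 + 1))) * hb2
  · -- p = q
    rw [if_pos rfl]
    simp only [mfun, min_self, max_self]
    rcases Nat.eq_zero_or_pos p with rfl | hp0
    · rw [if_pos (Or.inl rfl : (0 : ℕ) = 0 ∨ 0 = n - 1),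
        if_pos (show 0 + 1 < n from by omega), if_neg (show ¬(0 < 0) from by omega)]
      simp only [zero_add]
      rw [show min 1 0 = 0 from by omega, show max 1 0 = 1 from by omega,
        show n - 1 - 1 = n - 2 from by omega]
      simp only [pow_zero, pow_one, beta_zero, Nat.sub_zero]
      field_simp
      linear_combination (-beta c d (n - 2)) * hb2
    · by_cases hl : p = n - 1
      · rw [if_pos (Or.inr hl : p = 0 ∨ p = n - 1),
          if_neg (show ¬(p + 1 < n) from by omega), if_pos hp0]
        obtain ⟨p', rfl⟩ : ∃ t, p = t + 1 := ⟨p - 1, by omega⟩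
        simp only [Nat.add_sub_cancel,
          min_eq_left (show p' ≤ p' + 1 from by omega),
          max_eq_right (show p' ≤ p' + 1 from by omega)]
        rw [show n - 1 - (p' + 1) = 0 from by omega, show n - 1 = p' + 1 from by omega,
          show n - 2 = p' from by omega]
        have hD0' : d * beta c d (p' + 1) - beta c d p' ≠ 0 := by
          rw [show p' + 1 = n - 1 from by omega, show p' = n - 2 from by omega]
          exact hD0
        have hA : b ^ p' * b ^ (p' + 1) = b := by
          rw [pow_succ b p', ← mul_assoc, pow_self_mul_self hb2, one_mul]
        simp only [beta_zero]
        rw [pow_self_mul_self hb2 (p' + 1), hA]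
        field_simp
        linear_combination (-beta c d p') * hb2
      · rw [if_neg (show ¬(p = 0 ∨ p = n - 1) from by omega),
          if_pos (show p + 1 < n from by omega), if_pos hp0]
        obtain ⟨p', rfl⟩ : ∃ t, p = t + 1 := ⟨p - 1, by omega⟩
        obtain ⟨k, hk⟩ : ∃ k, n - 1 - (p' + 1 + 1) = k := ⟨_, rfl⟩
        simp only [Nat.add_sub_cancel,
          min_eq_left (show p' ≤ p' + 1 from by omega),
          max_eq_right (show p' ≤ p' + 1 from by omega),
          min_eq_right (show p' + 1 ≤ p' + 1 + 1 from by omega),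
          max_eq_left (show p' + 1 ≤ p' + 1 + 1 from by omega)]
        rw [show n - 1 - (p' + 1 + 1) = k from hk,
          show n - 1 - (p' + 1) = k + 1 from by omega,
          show n - 1 = p' + 1 + k + 1 from by omega,
          show n - 2 = p' + 1 + k from by omega]
        have hD0' : d * beta c d (p' + 1 + k + 1) - beta c d (p' + 1 + k) ≠ 0 := by
          rw [show p' + 1 + k + 1 = n - 1 from by omega, show p' + 1 + k = n - 2 from by omega]
          exact hD0
        have hA : b ^ (p' + 1 + 1) * b ^ (p' + 1) = b := by
          rw [pow_succ b (p' + 1), mul_comm (b ^ (p' + 1)) b, mul_assoc,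
            pow_self_mul_self hb2, mul_one]
        have hB : b ^ p' * b ^ (p' + 1) = b := by
          rw [pow_succ b p', ← mul_assoc, pow_self_mul_self hb2, one_mul]
        have F := beta_F c d k (p' + 1)
        have e : beta c d (p' + 1 + 1) = c * beta c d (p' + 1) - beta c d p' := beta_rec c d p'
        rw [pow_self_mul_self hb2 (p' + 1), hA, hB]
        field_simp
        linear_combination F - beta c d (k + 1) * e
          + (-(beta c d (p' + 1) * beta c d k + beta c d p' * beta c d (k + 1))) * hb2
  · -- q < p
    have hne : ¬(p = q) := by omega
    rw [if_neg hne]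
    obtain ⟨p', rfl⟩ : ∃ t, p = t + 1 := ⟨p - 1, by omega⟩
    simp only [mfun, Nat.add_sub_cancel,
      min_eq_right (show q ≤ p' + 1 from by omega),
      max_eq_left (show q ≤ p' + 1 from by omega),
      min_eq_right (show q ≤ p' + 1 + 1 from by omega),
      max_eq_left (show q ≤ p' + 1 + 1 from by omega),
      min_eq_right (show q ≤ p' from by omega),
      max_eq_left (show q ≤ p' from by omega)]
    rw [if_pos (show 0 < p' + 1 from by omega)]
    by_cases hl : p' + 1 = n - 1
    · rw [if_pos (Or.inr hl : p' + 1 = 0 ∨ p' + 1 = n - 1),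
        if_neg (show ¬(p' + 1 + 1 < n) from by omega)]
      rw [show n - 1 - (p' + 1) = 0 from by omega, show n - 1 - p' = 1 from by omega]
      simp only [beta_zero, beta_one]
      rw [pow_succ' b p']
      field_simp
      ring
    · rw [if_neg (show ¬(p' + 1 = 0 ∨ p' + 1 = n - 1) from by omega),
        if_pos (show p' + 1 + 1 < n from by omega)]
      obtain ⟨k, hk⟩ : ∃ k, n - 1 - (p' + 1 + 1) = k := ⟨_, rfl⟩
      rw [show n - 1 - (p' + 1 + 1) = k from hk,
        show n - 1 - (p' + 1) = k + 1 from by omega,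
        show n - 1 - p' = k + 2 from by omega]
      have e : beta c d (k + 2) = c * beta c d (k + 1) - beta c d k := beta_rec c d k
      rw [pow_succ' b (p' + 1), pow_succ' b p']
      field_simp
      linear_combination (-(b * b ^ p' * b ^ q * beta c d q)) * e
        + (-(b * b ^ p' * b ^ q * beta c d q * beta c d k)) * hb2

/-- Q is invertible iff d β_{n−1} − β_{n−2} ≠ 0, and in that case
Q⁻¹ is symmetric with (Q⁻¹)ᵢⱼ = uᵢ vⱼ for i ≤ j, where (1-based)
uᵢ = b^{i−1} β_{i−1} and vⱼ = b^{j−1} β_{n−j} / (d β_{n−1} − β_{n−2}). -/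
theorem triQ_inv (n : ℕ) (hn : 2 ≤ n) (b c d : ℝ) (hb : b = 1 ∨ b = -1)
    (hc : 0 ≤ c) (hlam : c - d ≠ 0) :
    (IsUnit (triQ n b c d) ↔ d * beta c d (n - 1) - beta c d (n - 2) ≠ 0) ∧
    (d * beta c d (n - 1) - beta c d (n - 2) ≠ 0 →
      ((triQ n b c d)⁻¹).IsSymm ∧
      ∀ i j : Fin n, i ≤ j →
        (triQ n b c d)⁻¹ i j =
          (b ^ (i : ℕ) * beta c d (i : ℕ)) *
            (b ^ (j : ℕ) * beta c d (n - 1 - (j : ℕ)) /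
              (d * beta c d (n - 1) - beta c d (n - 2)))) := by
  have hb2 : b * b = 1 := by rcases hb with rfl | rfl <;> norm_num
  set D := d * beta c d (n - 1) - beta c d (n - 2) with hD
  -- the candidate inverse, as a matrix
  have main : D ≠ 0 → triQ n b c d * Matrix.of (fun i j : Fin n =>
      mfun n b c d D (i : ℕ) (j : ℕ)) = 1 := by
    intro hD0
    ext i j
    rw [Matrix.mul_apply]
    have hrow := triQ_row n b c d (fun t => mfun n b c d D t (j : ℕ)) i
    rw [show ∑ k : Fin n, triQ n b c d i k * Matrix.of
        (fun i j : Fin n => mfun n b c d D (i : ℕ) (j : ℕ)) k j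
        = ∑ k : Fin n, triQ n b c d i k * mfun n b c d D (k : ℕ) (j : ℕ) from rfl, hrow]
    rw [entry_eq n hn b c d hb2 D hD hD0 (i : ℕ) (j : ℕ) i.isLt j.isLt]
    rcases eq_or_ne i j with rfl | hne
    · rw [if_pos rfl, Matrix.one_apply_eq]
    · rw [if_neg (fun hc' => hne (Fin.ext hc')), Matrix.one_apply_ne hne]
  constructor
  · constructor
    · intro hU
      by_contra hD0
      rw [hD] at hD0
      -- build a kernel vector
      have hker : ∃ v ≠ 0, (triQ n b c d).mulVec v = 0 := by
        refine ⟨fun k => b ^ (k : ℕ) * beta c d (k : ℕ), ?_, ?_⟩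
        · intro h0
          have h1 := congrFun h0 ⟨0, by omega⟩
          simp [beta_zero] at h1
        · funext i
          show ∑ k : Fin n, triQ n b c d i k * (b ^ (k : ℕ) * beta c d (k : ℕ)) = 0
          rw [triQ_row n b c d (fun t => b ^ t * beta c d t) i]
          rcases Nat.eq_zero_or_pos (i : ℕ) with h0 | hpos
          · rw [h0]
            rw [if_pos (Or.inl rfl : (0 : ℕ) = 0 ∨ 0 = n - 1),
              if_pos (show 0 + 1 < n from by omega), if_neg (show ¬(0 < 0) from by omega)]
            simp only [pow_zero, beta_zero, zero_add, pow_one, beta_one]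
            linear_combination (-d) * hb2
          · by_cases hlast : (i : ℕ) = n - 1
            · rw [if_pos (Or.inr hlast : (i : ℕ) = 0 ∨ (i : ℕ) = n - 1),
                if_neg (show ¬((i : ℕ) + 1 < n) from by omega), if_pos hpos]
              obtain ⟨p, hp⟩ : ∃ t, (i : ℕ) = t + 1 := ⟨(i : ℕ) - 1, by omega⟩
              rw [hp]
              simp only [Nat.add_sub_cancel]
              rw [show n - 1 = p + 1 from by omega, show n - 2 = p from by omega] at hD0
              rw [pow_succ]
              linear_combination (b ^ p * b) * hD0
            · rw [if_neg (show ¬((i : ℕ) = 0 ∨ (i : ℕ) = n - 1) from by omega),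
                if_pos (show (i : ℕ) + 1 < n from by omega), if_pos hpos]
              obtain ⟨p, hp⟩ : ∃ t, (i : ℕ) = t + 1 := ⟨(i : ℕ) - 1, by omega⟩
              rw [hp]
              simp only [Nat.add_sub_cancel]
              have e : beta c d (p + 1 + 1) = c * beta c d (p + 1) - beta c d p := beta_rec c d p
              simp only [pow_succ]
              linear_combination (-(b ^ p * b)) * e
                + (-(b ^ p * b * beta c d (p + 1 + 1))) * hb2
      have hdet : (triQ n b c d).det = 0 := Matrix.exists_mulVec_eq_zero_iff.mp hker
      have hud := (Matrix.isUnit_iff_isUnit_det _).mp hU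
      rw [hdet] at hud
      exact hud.ne_zero rfl
    · intro hD0
      exact (Matrix.isUnit_iff_isUnit_det _).mpr (Matrix.isUnit_det_of_right_inverse (main hD0))
  · intro hD0
    have hInv : (triQ n b c d)⁻¹ = Matrix.of (fun i j : Fin n =>
        mfun n b c d D (i : ℕ) (j : ℕ)) := Matrix.inv_eq_right_inv (main hD0)
    constructor
    · rw [hInv]
      ext i j
      simp only [Matrix.transpose_apply, Matrix.of_apply, mfun]
      rw [min_comm, max_comm]
      ring
    · intro i j hij
      have hij' : (i : ℕ) ≤ (j : ℕ) := hij
      rw [hInv]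
      simp only [Matrix.of_apply, mfun, min_eq_left hij', max_eq_right hij']
      ring
end

section
/- Let n ≥ 2, b ∈ {1, −1}, c = 2 and d be real with λ = 2 − d satisfying λ ≠ 0, λ ≠ 1 and λ ≠ (n+1)/(n−1), and let Q be the corresponding n×n tridiagonal matrix. Then Q is invertible and for all 1 ≤ i ≤ j ≤ n, (Q^{-1})_{ij} = b^{i+j} · {1 + (1−λ)(i−1)} · {1 + (1−λ)(n−j)} / [ (1−λ) { (1−λ)(n−1) + 2 } ]. -/
noncomputable def invM (n : ℕ) (b d : ℝ) : Matrix (Fin n) (Fin n) ℝ :=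
  Matrix.of fun i j =>
    b ^ ((i : ℕ) + (j : ℕ)) *
      ((1 + (d - 1) * (min (i : ℕ) (j : ℕ) : ℕ)) *
        (1 + (d - 1) * ((n : ℝ) - 1 - (max (i : ℕ) (j : ℕ) : ℕ)))) /
      ((d - 1) * ((d - 1) * ((n : ℝ) - 1) + 2))

lemma triQ_eval_zero (n : ℕ) (b c d : ℝ) (i j : Fin n)
    (h : (i : ℕ) ≠ (j : ℕ)) (h1 : (i : ℕ) + 1 ≠ (j : ℕ)) (h2 : (j : ℕ) + 1 ≠ (i : ℕ)) :
    triQ n b c d i j = 0 := by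
  simp only [triQ, Matrix.of_apply]
  rw [if_neg (fun e => h (by rw [e])), if_neg (by omega)]

lemma triQ_eval_off (n : ℕ) (b c d : ℝ) (i j : Fin n)
    (h : (i : ℕ) + 1 = (j : ℕ) ∨ (j : ℕ) + 1 = (i : ℕ)) :
    triQ n b c d i j = -b := by
  simp only [triQ, Matrix.of_apply]
  rw [if_neg (fun e => by subst e; omega), if_pos h]

lemma triQ_eval_diag_end (n : ℕ) (b c d : ℝ) (i : Fin n)
    (h : (i : ℕ) = 0 ∨ (i : ℕ) = n - 1) : triQ n b c d i i = d := by
  simp only [triQ, Matrix.of_apply, if_pos rfl, if_true]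
  rw [if_pos h]

lemma triQ_eval_diag_mid (n : ℕ) (b c d : ℝ) (i : Fin n)
    (h : ¬((i : ℕ) = 0 ∨ (i : ℕ) = n - 1)) : triQ n b c d i i = c := by
  simp only [triQ, Matrix.of_apply, if_pos rfl, if_true]
  rw [if_neg h]

lemma row_zero (n : ℕ) (hn : 2 ≤ n) (b c d : ℝ) (f : Fin n → ℝ) :
    (∑ j, triQ n b c d ⟨0, by omega⟩ j * f j)
      = d * f ⟨0, by omega⟩ + (-b) * f ⟨1, by omega⟩ := by
  rw [← Finset.sum_subset
    (Finset.subset_univ ({⟨0, by omega⟩, ⟨1, by omega⟩} : Finset (Fin n)))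
    (fun x _ hx => ?_)]
  · rw [Finset.sum_pair (by simp [Fin.ext_iff])]
    rw [triQ_eval_diag_end n b c d _ (Or.inl rfl),
        triQ_eval_off n b c d _ _ (Or.inl rfl)]
  · simp only [Finset.mem_insert, Finset.mem_singleton, not_or, Fin.ext_iff] at hx
    rw [triQ_eval_zero n b c d _ _ (by simp only [Fin.val_mk]; omega) (by simp only [Fin.val_mk]; omega) (by simp only [Fin.val_mk]; omega), zero_mul]

lemma row_last (n m : ℕ) (hm : n = m + 2) (b c d : ℝ) (f : Fin n → ℝ) :
    (∑ j, triQ n b c d ⟨m + 1, by omega⟩ j * f j)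
      = (-b) * f ⟨m, by omega⟩ + d * f ⟨m + 1, by omega⟩ := by
  rw [← Finset.sum_subset
    (Finset.subset_univ ({⟨m, by omega⟩, ⟨m + 1, by omega⟩} : Finset (Fin n)))
    (fun x _ hx => ?_)]
  · rw [Finset.sum_pair (by simp [Fin.ext_iff])]
    rw [triQ_eval_diag_end n b c d _ (Or.inr (by simp only [Fin.val_mk]; omega)),
        triQ_eval_off n b c d _ _ (Or.inr (by simp))]
  · simp only [Finset.mem_insert, Finset.mem_singleton, not_or, Fin.ext_iff] at hx
    rw [triQ_eval_zero n b c d _ _ (by simp only [Fin.val_mk]; omega) (by simp only [Fin.val_mk]; omega) (by simp only [Fin.val_mk]; omega), zero_mul]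

lemma row_mid (n m : ℕ) (hm : m + 3 ≤ n) (b c d : ℝ) (f : Fin n → ℝ) :
    (∑ j, triQ n b c d ⟨m + 1, by omega⟩ j * f j)
      = (-b) * f ⟨m, by omega⟩ + c * f ⟨m + 1, by omega⟩ + (-b) * f ⟨m + 2, by omega⟩ := by
  rw [← Finset.sum_subset
    (Finset.subset_univ ({⟨m, by omega⟩, ⟨m + 1, by omega⟩, ⟨m + 2, by omega⟩} : Finset (Fin n)))
    (fun x _ hx => ?_)]
  · rw [Finset.sum_insert (by simp [Fin.ext_iff]), Finset.sum_pair (by simp [Fin.ext_iff])]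
    rw [triQ_eval_off n b c d _ _ (Or.inr (by simp)),
        triQ_eval_diag_mid n b c d _ (by simp only [Fin.val_mk]; omega),
        triQ_eval_off n b c d _ _ (Or.inl (by simp))]
    ring
  · simp only [Finset.mem_insert, Finset.mem_singleton, not_or, Fin.ext_iff] at hx
    rw [triQ_eval_zero n b c d _ _ (by simp only [Fin.val_mk]; omega) (by simp only [Fin.val_mk]; omega) (by simp only [Fin.val_mk]; omega), zero_mul]

lemma key_mul (n : ℕ) (hn : 2 ≤ n) (b d : ℝ) (hb : b = 1 ∨ b = -1)
    (hmu : d - 1 ≠ 0) (hD2 : (d - 1) * ((n : ℝ) - 1) + 2 ≠ 0) :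
    triQ n b 2 d * invM n b d = 1 := by
  have hb2 : b ^ 2 = 1 := by rcases hb with rfl | rfl <;> norm_num
  have hD : (d - 1) * ((d - 1) * ((n : ℝ) - 1) + 2) ≠ 0 := mul_ne_zero hmu hD2
  ext i k
  rw [Matrix.mul_apply, Matrix.one_apply]
  rcases Nat.eq_zero_or_pos (i : ℕ) with hi | hi
  · -- first row
    have hi' : i = ⟨0, by omega⟩ := Fin.ext hi
    rw [hi']
    rw [row_zero n hn b 2 d (fun j => invM n b d j k)]
    rcases Nat.eq_zero_or_pos (k : ℕ) with hk | hk
    · have hk' : k = ⟨0, by omega⟩ := Fin.ext hk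
      rw [hk']
      rw [if_pos rfl]
      simp only [invM, Matrix.of_apply, Fin.val_mk]
      norm_num
      field_simp
      rcases hb with rfl | rfl <;> push_cast <;> ring
    · rw [if_neg (by simp only [Fin.ext_iff, Fin.val_mk]; omega)]
      simp only [invM, Matrix.of_apply, Fin.val_mk]
      rw [min_eq_left (by omega : 0 ≤ (k : ℕ)), max_eq_right (by omega : 0 ≤ (k : ℕ)),
          min_eq_left (by omega : 1 ≤ (k : ℕ)), max_eq_right (by omega : 1 ≤ (k : ℕ)),
          show 0 + (k : ℕ) = (k : ℕ) from by omega,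
          show 1 + (k : ℕ) = (k : ℕ) + 1 from by omega]
      simp only [pow_succ]
      field_simp
      rcases hb with rfl | rfl <;> push_cast <;> ring
  · rcases Nat.lt_or_ge (i : ℕ) (n - 1) with hi2 | hi2
    · -- interior row
      obtain ⟨m, hm⟩ : ∃ m, (i : ℕ) = m + 1 := ⟨(i : ℕ) - 1, by omega⟩
      have hm3 : m + 3 ≤ n := by omega
      have hi' : i = ⟨m + 1, by omega⟩ := Fin.ext hm
      rw [hi']
      rw [row_mid n m hm3 b 2 d (fun j => invM n b d j k)]
      rcases Nat.lt_trichotomy (k : ℕ) (m + 1) with hk | hk | hk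
      · -- k ≤ m
        rw [if_neg (by simp only [Fin.ext_iff, Fin.val_mk]; omega)]
        simp only [invM, Matrix.of_apply, Fin.val_mk]
        rw [min_eq_right (by omega : (k : ℕ) ≤ m), max_eq_left (by omega : (k : ℕ) ≤ m),
            min_eq_right (by omega : (k : ℕ) ≤ m + 1), max_eq_left (by omega : (k : ℕ) ≤ m + 1),
            min_eq_right (by omega : (k : ℕ) ≤ m + 2), max_eq_left (by omega : (k : ℕ) ≤ m + 2),
            show m + 1 + (k : ℕ) = m + (k : ℕ) + 1 from by omega,
            show m + 2 + (k : ℕ) = m + (k : ℕ) + 1 + 1 from by omega]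
        simp only [pow_succ]
        field_simp
        rcases hb with rfl | rfl <;> push_cast <;> ring
      · -- k = m + 1 : diagonal entry
        have hk' : k = ⟨m + 1, by omega⟩ := Fin.ext (by simp only [Fin.val_mk]; omega)
        rw [hk']
        rw [if_pos rfl]
        simp only [invM, Matrix.of_apply, Fin.val_mk]
        rw [min_eq_left (by omega : m ≤ m + 1), max_eq_right (by omega : m ≤ m + 1),
            min_self, max_self,
            min_eq_right (by omega : m + 1 ≤ m + 2), max_eq_left (by omega : m + 1 ≤ m + 2),
            show m + (m + 1) = 2 * m + 1 from by omega,
            show m + 1 + (m + 1) = 2 * m + 1 + 1 from by omega,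
            show m + 2 + (m + 1) = 2 * m + 1 + 1 + 1 from by omega]
        simp only [pow_succ, pow_mul, hb2, one_pow]
        field_simp
        rcases hb with rfl | rfl <;> push_cast <;> ring
      · -- k ≥ m + 2
        rw [if_neg (by simp only [Fin.ext_iff, Fin.val_mk]; omega)]
        simp only [invM, Matrix.of_apply, Fin.val_mk]
        rw [min_eq_left (by omega : m ≤ (k : ℕ)), max_eq_right (by omega : m ≤ (k : ℕ)),
            min_eq_left (by omega : m + 1 ≤ (k : ℕ)), max_eq_right (by omega : m + 1 ≤ (k : ℕ)),
            min_eq_left (by omega : m + 2 ≤ (k : ℕ)), max_eq_right (by omega : m + 2 ≤ (k : ℕ)),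
            show m + 1 + (k : ℕ) = m + (k : ℕ) + 1 from by omega,
            show m + 2 + (k : ℕ) = m + (k : ℕ) + 1 + 1 from by omega]
        simp only [pow_succ]
        field_simp
        rcases hb with rfl | rfl <;> push_cast <;> ring
    · -- last row
      obtain ⟨m, rfl⟩ : ∃ m, n = m + 2 := ⟨n - 2, by omega⟩
      have hi' : i = ⟨m + 1, by omega⟩ := Fin.ext (by simp only [Fin.val_mk]; omega)
      rw [hi']
      rw [row_last (m + 2) m rfl b 2 d (fun j => invM (m + 2) b d j k)]
      rcases Nat.lt_or_ge (k : ℕ) (m + 1) with hk | hk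
      · -- k ≤ m
        rw [if_neg (by simp only [Fin.ext_iff, Fin.val_mk]; omega)]
        simp only [invM, Matrix.of_apply, Fin.val_mk]
        rw [min_eq_right (by omega : (k : ℕ) ≤ m), max_eq_left (by omega : (k : ℕ) ≤ m),
            min_eq_right (by omega : (k : ℕ) ≤ m + 1), max_eq_left (by omega : (k : ℕ) ≤ m + 1),
            show m + 1 + (k : ℕ) = m + (k : ℕ) + 1 from by omega]
        simp only [pow_succ]
        have hDD : (d - 1) * ((d - 1) * ((m:ℝ) + 2 - 1) + 2) ≠ 0 := by push_cast at hD; exact hD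
        field_simp [hDD]
        rcases hb with rfl | rfl <;> push_cast <;> ring
      · -- k = m + 1
        have hk' : k = ⟨m + 1, by omega⟩ := Fin.ext (by simp only [Fin.val_mk]; omega)
        rw [hk']
        rw [if_pos rfl]
        simp only [invM, Matrix.of_apply, Fin.val_mk]
        rw [min_eq_left (by omega : m ≤ m + 1), max_eq_right (by omega : m ≤ m + 1),
            min_self, max_self,
            show m + (m + 1) = 2 * m + 1 from by omega,
            show m + 1 + (m + 1) = 2 * m + 1 + 1 from by omega]
        simp only [pow_succ, pow_mul, hb2, one_pow]
        have hDD : (d - 1) * ((d - 1) * ((m:ℝ) + 2 - 1) + 2) ≠ 0 := by push_cast at hD; exact hD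
        field_simp [hDD]
        rcases hb with rfl | rfl <;> push_cast <;> ring


/-- Corollary, c = 2: with λ = 2 − d, λ ∉ {0, 1, (n+1)/(n−1)},
Q is invertible and for 1 ≤ i ≤ j ≤ n,
(Q⁻¹)ᵢⱼ = b^{i+j} {1+(1−λ)(i−1)}{1+(1−λ)(n−j)} / [(1−λ){(1−λ)(n−1)+2}]. -/
theorem triQ_inv_c_eq_two (n : ℕ) (hn : 2 ≤ n) (b d : ℝ) (hb : b = 1 ∨ b = -1)
    (h0 : (2 : ℝ) - d ≠ 0) (h1 : (2 : ℝ) - d ≠ 1)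
    (h2 : (2 : ℝ) - d ≠ ((n : ℝ) + 1) / ((n : ℝ) - 1)) :
    IsUnit (triQ n b 2 d) ∧
    ∀ i j : Fin n, i ≤ j →
      (triQ n b 2 d)⁻¹ i j =
        b ^ (((i : ℕ) + 1) + ((j : ℕ) + 1)) *
          ((1 + (1 - (2 - d)) * (i : ℕ)) *
            (1 + (1 - (2 - d)) * ((n : ℝ) - ((j : ℕ) + 1)))) /
          ((1 - (2 - d)) * ((1 - (2 - d)) * ((n : ℝ) - 1) + 2)) := by
  have hn2 : (2 : ℝ) ≤ (n : ℝ) := by exact_mod_cast hn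
  have hmu : d - 1 ≠ 0 := fun h => h1 (by linarith [sub_eq_zero.mp h])
  have hD2 : (d - 1) * ((n : ℝ) - 1) + 2 ≠ 0 := by
    intro h
    apply h2
    rw [eq_div_iff (by linarith : (n : ℝ) - 1 ≠ 0)]
    linear_combination -h
  have key := key_mul n hn b d hb hmu hD2
  have hinv : (triQ n b 2 d)⁻¹ = invM n b d := Matrix.inv_eq_right_inv key
  have hD : (d - 1) * ((d - 1) * ((n : ℝ) - 1) + 2) ≠ 0 := mul_ne_zero hmu hD2
  constructor
  · exact (Matrix.isUnit_iff_isUnit_det _).2 (Matrix.isUnit_det_of_right_inverse key)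
  · intro i j hij
    rw [hinv]
    simp only [invM, Matrix.of_apply]
    have hij' : (i : ℕ) ≤ (j : ℕ) := hij
    rw [min_eq_left hij', max_eq_right hij',
        show (i : ℕ) + 1 + ((j : ℕ) + 1) = (i : ℕ) + (j : ℕ) + 1 + 1 from by omega]
    simp only [pow_succ]
    rw [show (1 : ℝ) - (2 - d) = d - 1 from by ring]
    field_simp
    rcases hb with rfl | rfl <;> push_cast <;> ring
end

section
/- Let n ≥ 2 and let c > 2 and d > 1 be real with λ = c − d. Then the real numbers κ_i = φ_+ r_+^i − φ_- r_-^i satisfy 0 < κ_0 < κ_1 < ⋯ < κ_{n−1}, and κ = φ_+² r_+^{n−1} − φ_-² r_-^{n−1} > 0. -/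
/-- Property: for c > 2 and d > 1, the real numbers
κᵢ = φ₊ r₊ⁱ − φ₋ r₋ⁱ satisfy 0 < κ₀ < κ₁ < ⋯ < κ_{n−1}, and
κ = φ₊² r₊^{n−1} − φ₋² r₋^{n−1} > 0. -/
theorem kappa_pos_strictMono (n : ℕ) (hn : 2 ≤ n) (c d : ℝ) (hc : 2 < c) (hd : 1 < d) :
    let lam : ℝ := c - d
    let rp : ℝ := (c + Real.sqrt (c ^ 2 - 4)) / 2
    let rm : ℝ := (c - Real.sqrt (c ^ 2 - 4)) / 2
    let kappa : ℕ → ℝ := fun i => (rp - lam) * rp ^ i - (rm - lam) * rm ^ i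
    0 < kappa 0 ∧
    (∀ i : ℕ, i + 1 ≤ n - 1 → kappa i < kappa (i + 1)) ∧
    0 < (rp - lam) ^ 2 * rp ^ (n - 1) - (rm - lam) ^ 2 * rm ^ (n - 1) := by
  intro lam rp rm kappa
  set s : ℝ := Real.sqrt (c ^ 2 - 4) with hs_def
  have h4 : (0:ℝ) < c ^ 2 - 4 := by nlinarith
  have hs2 : s ^ 2 = c ^ 2 - 4 := Real.sq_sqrt h4.le
  have hs0 : 0 < s := Real.sqrt_pos.2 h4
  have hsc : s < c := by nlinarith
  have hrm0 : 0 < rm := by show 0 < (c - s) / 2; linarith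
  have hprod : rp * rm = 1 := by
    show (c + s) / 2 * ((c - s) / 2) = 1
    nlinarith
  have hrprm : rp - rm = s := by show (c + s) / 2 - (c - s) / 2 = s; ring
  have hsum : rp + rm = c := by show (c + s) / 2 + (c - s) / 2 = c; ring
  have hrp1 : 1 < rp := by nlinarith
  have hrm1 : rm < 1 := by nlinarith
  have hA : ∀ i : ℕ, 1 ≤ rp ^ i := fun i => one_le_pow₀ hrp1.le
  have hB : ∀ i : ℕ, 0 < rm ^ i := fun i => pow_pos hrm0 i
  have hB1 : ∀ i : ℕ, rm ^ i ≤ 1 := fun i => pow_le_one₀ hrm0.le hrm1.le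
  refine ⟨?_, ?_, ?_⟩
  · show 0 < (rp - lam) * rp ^ 0 - (rm - lam) * rm ^ 0
    simp only [pow_zero, mul_one]
    have : rp - lam - (rm - lam) = s := by rw [show rp - lam - (rm - lam) = rp - rm by ring, hrprm]
    linarith
  · intro i _
    show (rp - lam) * rp ^ i - (rm - lam) * rm ^ i <
      (rp - lam) * rp ^ (i + 1) - (rm - lam) * rm ^ (i + 1)
    have hpA : rp ^ (i + 1) = rp ^ i * rp := pow_succ rp i
    have hpB : rm ^ (i + 1) = rm ^ i * rm := pow_succ rm i
    have hA' := hA i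
    have hB' := hB i
    have hB1' := hB1 i
    have hlamp : rp - lam = d - rm := by simp only [lam]; linarith
    have hlamm : rm - lam = d - rp := by simp only [lam]; linarith
    rw [hpA, hpB, hlamp, hlamm]
    nlinarith [mul_pos (mul_pos hB' (show (0:ℝ) < d - 1 by linarith))
        (show (0:ℝ) < rp - rm by linarith),
      mul_nonneg (mul_nonneg (show (0:ℝ) ≤ d - rm by linarith)
        (show (0:ℝ) ≤ rp - 1 by linarith)) (show (0:ℝ) ≤ rp ^ i - rm ^ i by linarith)]
  · set k := n - 1 with hk_def
    have hk : 1 ≤ k := by omega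
    have hA' := hA k
    have hArp : rp ≤ rp ^ k := le_self_pow₀ hrp1.le (by omega)
    have hB' := hB k
    have hAB : rp ^ k * rm ^ k = 1 := by rw [← mul_pow, hprod, one_pow]
    have hlamp : rp - lam = d - rm := by simp only [lam]; linarith
    have hlamm : rm - lam = d - rp := by simp only [lam]; linarith
    rw [hlamp, hlamm]
    have hdrm : 0 < d - rm := by linarith
    have hbound : (d - rm) * rp ≤ (d - rm) * rp ^ k :=
      mul_le_mul_of_nonneg_left hArp hdrm.le
    have hdrp : (d - rm) * rp = d * rp - 1 := by nlinarith
    have h1 : (rp - d) ^ 2 < ((d - rm) * rp ^ k) ^ 2 := by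
      apply sq_lt_sq'
      · nlinarith [mul_pos (show (0:ℝ) < rp - 1 by linarith) (show (0:ℝ) < d + 1 by linarith)]
      · nlinarith [mul_pos (show (0:ℝ) < d - 1 by linarith) (show (0:ℝ) < rp + 1 by linarith)]
    have h2 : ((d - rm) * rp ^ k) ^ 2 * rm ^ k = (d - rm) ^ 2 * rp ^ k := by
      have e : ((d - rm) * rp ^ k) ^ 2 * rm ^ k
          = (d - rm) ^ 2 * rp ^ k * (rp ^ k * rm ^ k) := by ring
      rw [e, hAB, mul_one]
    have h3 := mul_lt_mul_of_pos_right h1 hB'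
    rw [h2] at h3
    linarith
end

section
/- Let n ≥ 2 and let c > 2 and d > 1 be real with λ = c − d. Then the real numbers κ_i = φ_+ r_+^i − φ_- r_-^i satisfy the identity κ_i − κ_{i−1} = κ_1 − κ_0 + (c−2) Σ_{j=1}^{i−1} κ_j for i = 1, …, n−1, and consequently κ_{n−i−1} + κ_i < κ_{n−i} + κ_{i−1} for every i = 1, …, ⌈n/2⌉ − 1. -/
/-- Property: for c > 2 and d > 1, with κᵢ = φ₊ r₊ⁱ − φ₋ r₋ⁱ,
κᵢ − κ_{i−1} = κ₁ − κ₀ + (c−2) Σ_{j=1}^{i−1} κⱼ for i = 1, …, n−1, and hence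
κ_{n−i−1} + κᵢ < κ_{n−i} + κ_{i−1} for i = 1, …, ⌈n/2⌉ − 1. -/
theorem kappa_diff (n : ℕ) (hn : 2 ≤ n) (c d : ℝ) (hc : 2 < c) (hd : 1 < d) :
    let lam : ℝ := c - d
    let rp : ℝ := (c + Real.sqrt (c ^ 2 - 4)) / 2
    let rm : ℝ := (c - Real.sqrt (c ^ 2 - 4)) / 2
    let kappa : ℕ → ℝ := fun i => (rp - lam) * rp ^ i - (rm - lam) * rm ^ i
    (∀ i : ℕ, 1 ≤ i → i ≤ n - 1 →
      kappa i - kappa (i - 1) =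
        kappa 1 - kappa 0 + (c - 2) * ∑ j ∈ Finset.Icc 1 (i - 1), kappa j) ∧
    (∀ i : ℕ, 1 ≤ i → i ≤ (n + 1) / 2 - 1 →
      kappa (n - i - 1) + kappa i < kappa (n - i) + kappa (i - 1)) := by
  intro lam rp rm kappa
  have hc4 : (0:ℝ) < c ^ 2 - 4 := by nlinarith
  have hs2 : Real.sqrt (c ^ 2 - 4) ^ 2 = c ^ 2 - 4 := Real.sq_sqrt (le_of_lt hc4)
  have hs0 : 0 < Real.sqrt (c ^ 2 - 4) := Real.sqrt_pos.mpr hc4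
  have hsc : Real.sqrt (c ^ 2 - 4) < c := by nlinarith
  have hrpdef : rp = (c + Real.sqrt (c ^ 2 - 4)) / 2 := rfl
  have hrmdef : rm = (c - Real.sqrt (c ^ 2 - 4)) / 2 := rfl
  have hsum : rp + rm = c := by rw [hrpdef, hrmdef]; ring
  have hprod : rp * rm = 1 := by rw [hrpdef, hrmdef]; nlinarith
  have hrm0 : 0 < rm := by rw [hrmdef]; linarith
  have hrm1 : rm < 1 := by nlinarith
  have hrp1 : 1 < rp := by nlinarith
  have hrp0 : 0 < rp := by linarith
  have hlam : lam = c - d := rfl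
  have hkdef : ∀ k : ℕ, kappa k = (rp - lam) * rp ^ k - (rm - lam) * rm ^ k := fun k => rfl
  have hkpos : ∀ k : ℕ, 0 < kappa (k + 1) := by
    intro k
    have hform : kappa (k + 1) = d * (rp ^ (k + 1) - rm ^ (k + 1)) - (rp ^ k - rm ^ k) := by
      rw [hkdef, hlam]
      linear_combination (rp ^ (k + 1) - rm ^ (k + 1)) * hsum + (rm ^ k - rp ^ k) * hprod
    have h1 : rp ^ k < rp ^ (k + 1) := by
      rw [pow_succ]; nlinarith [pow_pos hrp0 k]
    have h2 : rm ^ (k + 1) < rm ^ k := by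
      rw [pow_succ]; nlinarith [pow_pos hrm0 k]
    have h3 : rm ^ k ≤ rp ^ k := pow_le_pow_left₀ (le_of_lt hrm0) (by linarith) k
    rw [hform]; nlinarith
  have hrp2 : rp ^ 2 = c * rp - 1 := by linear_combination rp * hsum - hprod
  have hrm2 : rm ^ 2 = c * rm - 1 := by linear_combination rm * hsum - hprod
  have hkrec : ∀ k : ℕ, kappa (k + 2) = c * kappa (k + 1) - kappa k := by
    intro k
    rw [hkdef, hkdef, hkdef]
    linear_combination ((rp - lam) * rp ^ k) * hrp2 - ((rm - lam) * rm ^ k) * hrm2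
  have P : ∀ m : ℕ, kappa (m + 1) - kappa m =
      kappa 1 - kappa 0 + (c - 2) * ∑ j ∈ Finset.Icc 1 m, kappa j := by
    intro m
    induction m with
    | zero => simp
    | succ m ih =>
      rw [Finset.sum_Icc_succ_top (by omega : 1 ≤ m + 1)]
      linear_combination ih + hkrec m
  constructor
  · intro i hi1 _
    obtain ⟨m, rfl⟩ : ∃ m, i = m + 1 := ⟨i - 1, by omega⟩
    simpa using P m
  · intro i hi1 hi2
    have h2i : 2 * i + 1 ≤ n := by omega
    have hni : n - i = (n - i - 1) + 1 := by omega
    have e1 := P (i - 1)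
    have e2 := P (n - i - 1)
    rw [show i - 1 + 1 = i by omega] at e1
    rw [← hni] at e2
    have hsplit : (∑ j ∈ Finset.Icc 1 (n - i - 1), kappa j)
        = (∑ j ∈ Finset.Icc 1 (i - 1), kappa j)
          + ∑ j ∈ Finset.Ioc (i - 1) (n - i - 1), kappa j := by
      have h1 : Finset.Icc 1 (n - i - 1) = Finset.Ioc 0 (n - i - 1) := Finset.Icc_add_one_left_eq_Ioc 0 _
      have h2 : Finset.Icc 1 (i - 1) = Finset.Ioc 0 (i - 1) := Finset.Icc_add_one_left_eq_Ioc 0 _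
      rw [h1, h2]
      exact (Finset.sum_Ioc_consecutive _ (Nat.zero_le _) (by omega)).symm
    have hpos : 0 < ∑ j ∈ Finset.Ioc (i - 1) (n - i - 1), kappa j := by
      apply Finset.sum_pos
      · intro j hj
        simp only [Finset.mem_Ioc] at hj
        obtain ⟨k, rfl⟩ : ∃ k, j = k + 1 := ⟨j - 1, by omega⟩
        exact hkpos k
      · exact ⟨i, by simp only [Finset.mem_Ioc]; omega⟩
    have hc2 : 0 < c - 2 := by linarith
    have key : kappa (n - i) - kappa (n - i - 1) - (kappa i - kappa (i - 1))
        = (c - 2) * ∑ j ∈ Finset.Ioc (i - 1) (n - i - 1), kappa j := by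
      linear_combination e2 - e1 + (c - 2) * hsplit
    nlinarith [mul_pos hc2 hpos]
end

section
/- Let n ≥ 2, b = 1, c = 2 and d be real with λ = 2 − d ≠ 0, and suppose the corresponding n×n tridiagonal matrix Q is invertible. Then the sum s_i of the i-th row of Q^{-1} satisfies s_i = [ (n−1) u_i v_i + i v_i + (n−i+1) v_{n−i+1} ] / 2 for every i = 1, …, n. -/
open Matrix


lemma beta_two (d : ℝ) : ∀ k, beta 2 d k = 1 + k * (d - 1)
  | 0 => by simp [beta]
  | 1 => by simp [beta]
  | (k+2) => by
      rw [beta, beta_two d (k+1), beta_two d k]; push_cast; ring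

lemma tri_mulVec (n : ℕ) (d : ℝ) (x : Fin n → ℝ) (i : Fin n) :
    ∑ j, triQ n 1 2 d i j * x j =
      (if (i : ℕ) = 0 ∨ (i : ℕ) = n - 1 then d else 2) * x i
      - (if h : (i : ℕ) + 1 < n then x ⟨(i : ℕ) + 1, h⟩ else 0)
      - (if h : 0 < (i : ℕ) then x ⟨(i : ℕ) - 1, Nat.lt_of_le_of_lt (Nat.sub_le _ _) i.isLt⟩ else 0) := by
  have hpt : ∀ j : Fin n, triQ n 1 2 d i j * x j =
      (if i = j then (if (i : ℕ) = 0 ∨ (i : ℕ) = n - 1 then d else 2) * x j else 0)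
      + (if (i : ℕ) + 1 = (j : ℕ) then -x j else 0)
      + (if (j : ℕ) + 1 = (i : ℕ) then -x j else 0) := by
    intro j
    have hij : (i = j) ↔ ((i : ℕ) = (j : ℕ)) := Fin.ext_iff
    simp only [triQ, Matrix.of_apply, hij]
    split_ifs <;> first | ring1 | (exfalso; omega)
  rw [Finset.sum_congr rfl (fun j _ => hpt j), Finset.sum_add_distrib,
    Finset.sum_add_distrib]
  have h1 : ∑ j, (if i = j then (if (i : ℕ) = 0 ∨ (i : ℕ) = n - 1 then d else 2) * x j else 0)
      = (if (i : ℕ) = 0 ∨ (i : ℕ) = n - 1 then d else 2) * x i := by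
    rw [Finset.sum_ite_eq]; simp
  have h2 : ∑ j : Fin n, (if (i : ℕ) + 1 = ((j : Fin n) : ℕ) then -x j else 0)
      = -(if h : (i : ℕ) + 1 < n then x ⟨(i : ℕ) + 1, h⟩ else 0) := by
    by_cases h : (i : ℕ) + 1 < n
    · have hc : ∀ j : Fin n, ((i : ℕ) + 1 = (j : ℕ)) ↔ ((⟨(i:ℕ)+1, h⟩ : Fin n) = j) := by
        intro j; rw [Fin.ext_iff]
      simp only [hc]
      rw [Finset.sum_ite_eq, dif_pos h]
      simp
    · rw [dif_neg h, Finset.sum_eq_zero, neg_zero]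
      intro j _
      rw [if_neg]
      have := j.isLt
      omega
  have h3 : ∑ j : Fin n, (if ((j : Fin n) : ℕ) + 1 = (i : ℕ) then -x j else 0)
      = -(if h : 0 < (i : ℕ) then x ⟨(i : ℕ) - 1, Nat.lt_of_le_of_lt (Nat.sub_le _ _) i.isLt⟩ else 0) := by
    by_cases h : 0 < (i : ℕ)
    · have hc : ∀ j : Fin n, ((j : ℕ) + 1 = (i : ℕ)) ↔
          ((⟨(i:ℕ)-1, Nat.lt_of_le_of_lt (Nat.sub_le _ _) i.isLt⟩ : Fin n) = j) := by
        intro j; rw [Fin.ext_iff]; simp; omega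
      simp only [hc]
      rw [Finset.sum_ite_eq, dif_pos h]
      simp
    · rw [dif_neg h, Finset.sum_eq_zero, neg_zero]
      intro j _
      rw [if_neg]
      omega
  rw [h1, h2, h3]
  ring

/-- Theorem, row sums, c = 2 and b = 1: the i-th row sum of Q⁻¹
equals [(n−1) uᵢ vᵢ + i vᵢ + (n−i+1) v_{n−i+1}] / 2 (1-based indices). -/
theorem rowSum_c_eq_two_b_eq_one (n : ℕ) (hn : 2 ≤ n) (d : ℝ)
    (hlam : (2 : ℝ) - d ≠ 0) (hQ : IsUnit (triQ n 1 2 d)) :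
    let D : ℝ := d * beta 2 d (n - 1) - beta 2 d (n - 2)
    let u : ℕ → ℝ := fun i => (1 : ℝ) ^ (i - 1) * beta 2 d (i - 1)
    let v : ℕ → ℝ := fun i => (1 : ℝ) ^ (i - 1) * beta 2 d (n - i) / D
    ∀ i : Fin n, (∑ j, (triQ n 1 2 d)⁻¹ i j) =
      (((n : ℝ) - 1) * u ((i : ℕ) + 1) * v ((i : ℕ) + 1)
        + (((i : ℕ) + 1 : ℕ) : ℝ) * v ((i : ℕ) + 1)
        + ((n : ℝ) - (((i : ℕ) + 1 : ℕ) : ℝ) + 1) * v (n - ((i : ℕ) + 1) + 1)) / 2 := by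
  intro D u v i
  have h1n : 1 ≤ n := le_trans one_le_two hn
  set E : ℝ := (1+(d-1))*(1+((n:ℝ)-1)*(d-1)) - (1+((n:ℝ)-2)*(d-1)) with hEdef
  have hE : D = E := by
    unfold D E
    rw [beta_two, beta_two, Nat.cast_sub h1n, Nat.cast_sub hn]
    push_cast; ring
  have hdet := (Matrix.isUnit_iff_isUnit_det _).mp hQ
  have hQinv : (triQ n 1 2 d)⁻¹ * triQ n 1 2 d = 1 := Matrix.nonsing_inv_mul _ hdet
  -- D ≠ 0
  have hE0 : E ≠ 0 := by
    intro hD0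
    set w : Fin n → ℝ := fun j => 1 + ((j:ℕ):ℝ)*(d-1) with hw
    have hQw : triQ n 1 2 d *ᵥ w = 0 := by
      funext i2
      have hlt := i2.isLt
      show ∑ j, triQ n 1 2 d i2 j * w j = 0
      rw [tri_mulVec]
      by_cases hi0 : (i2:ℕ) = 0
      · rw [if_pos (Or.inl hi0), dif_pos (by omega), dif_neg (by omega)]
        simp only [hw, hi0]
        push_cast; ring
      · by_cases hin : (i2:ℕ) = n - 1
        · rw [if_pos (Or.inr hin), dif_neg (by omega), dif_pos (by omega)]
          simp only [hw, hin]
          have h11 : n - 1 - 1 = n - 2 := by omega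
          rw [h11, Nat.cast_sub h1n, Nat.cast_sub hn]
          push_cast
          linear_combination hD0
        · rw [if_neg (by omega), dif_pos (by omega), dif_pos (by omega)]
          simp only [hw]
          rw [Nat.cast_sub (by omega : 1 ≤ (i2:ℕ))]
          push_cast; ring
    have hw0 : w = 0 := by
      calc w = 1 *ᵥ w := (Matrix.one_mulVec w).symm
        _ = ((triQ n 1 2 d)⁻¹ * triQ n 1 2 d) *ᵥ w := by rw [hQinv]
        _ = (triQ n 1 2 d)⁻¹ *ᵥ (triQ n 1 2 d *ᵥ w) := by rw [Matrix.mulVec_mulVec]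
        _ = 0 := by rw [hQw, Matrix.mulVec_zero]
    have h0 : w ⟨0, by omega⟩ = 0 := by rw [hw0]; rfl
    simp [hw] at h0
  have hD : D ≠ 0 := by rw [hE]; exact hE0
  -- the candidate solution vector
  set x : Fin n → ℝ := fun j =>
      (((n:ℝ)-1)*(1+((j:ℕ):ℝ)*(d-1))*(1+((n:ℝ)-1-((j:ℕ):ℝ))*(d-1))
        + (((j:ℕ):ℝ)+1)*(1+((n:ℝ)-1-((j:ℕ):ℝ))*(d-1))
        + ((n:ℝ)-((j:ℕ):ℝ))*(1+((j:ℕ):ℝ)*(d-1))) / (2*D) with hx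
  have hQx : ∀ i2 : Fin n, ∑ j, triQ n 1 2 d i2 j * x j = 1 := by
    intro i2
    have hlt := i2.isLt
    rw [tri_mulVec]
    by_cases hi0 : (i2:ℕ) = 0
    · rw [if_pos (Or.inl hi0), dif_pos (by omega), dif_neg (by omega)]
      simp only [hx, hi0]
      rw [hE]
      push_cast
      field_simp
      ring
    · by_cases hin : (i2:ℕ) = n - 1
      · rw [if_pos (Or.inr hin), dif_neg (by omega), dif_pos (by omega)]
        simp only [hx, hin]
        have h11 : n - 1 - 1 = n - 2 := by omega
        rw [h11, hE, Nat.cast_sub h1n, Nat.cast_sub hn]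
        push_cast
        field_simp
        ring
      · rw [if_neg (by omega), dif_pos (by omega), dif_pos (by omega)]
        simp only [hx]
        rw [hE, Nat.cast_sub (by omega : 1 ≤ (i2:ℕ))]
        push_cast
        field_simp
        ring
  have hsum : ∑ j, (triQ n 1 2 d)⁻¹ i j = x i := by
    have h1v : (triQ n 1 2 d) *ᵥ x = fun _ => 1 := by
      funext i2
      simpa [Matrix.mulVec, dotProduct] using hQx i2
    calc ∑ j, (triQ n 1 2 d)⁻¹ i j = ((triQ n 1 2 d)⁻¹ *ᵥ (fun _ => (1:ℝ))) i := by
          simp [Matrix.mulVec, dotProduct]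
      _ = ((triQ n 1 2 d)⁻¹ *ᵥ (triQ n 1 2 d *ᵥ x)) i := by rw [h1v]
      _ = x i := by rw [Matrix.mulVec_mulVec, hQinv, Matrix.one_mulVec]
  rw [hsum]
  unfold x u v
  have hieq : n - (n - ((i:ℕ)+1) + 1) = (i:ℕ) := by omega
  simp only [one_pow, Nat.add_sub_cancel, hieq, beta_two]
  rw [Nat.cast_sub (by omega : (i:ℕ)+1 ≤ n)]
  push_cast
  field_simp
  ring
end

section
/- Let n ≥ 2, b ∈ {1, −1}, c ≥ 0 with c ≠ 2, and d be real with λ = c − d ≠ 0, and suppose the corresponding n×n tridiagonal matrix Q is invertible. Then the complex number coercion of trace(Q^{-1}) equals n (φ_+² r_+^{n−1} + φ_-² r_-^{n−1}) / (κ_0 κ) − 2ρ (r_+^n − r_-^n) / (κ_0² κ), where ρ = φ_+ φ_- = 1 − cλ + λ². -/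
open Matrix


noncomputable def tri (b : ℝ) (a : ℕ → ℝ) (k : ℕ) : Matrix (Fin k) (Fin k) ℝ :=
  Matrix.of fun i j =>
    if (i : ℕ) = (j : ℕ) then a i
    else if (i : ℕ) + 1 = (j : ℕ) ∨ (j : ℕ) + 1 = (i : ℕ) then -b else 0

lemma val_succAbove {n : ℕ} (p : Fin (n+1)) (j : Fin n) :
    ((p.succAbove j : Fin (n+1)) : ℕ) = if (j:ℕ) < (p:ℕ) then (j:ℕ) else (j:ℕ)+1 := by
  simp [Fin.succAbove, Fin.lt_def]
  split_ifs <;> simp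

lemma tri_congr {b : ℝ} {a a' : ℕ → ℝ} {k : ℕ} (h : ∀ i < k, a i = a' i) :
    tri b a k = tri b a' k := by
  ext i j
  simp only [tri, Matrix.of_apply]
  split_ifs with h1
  · exact h i i.isLt
  all_goals rfl

lemma det_tri_rec {b : ℝ} (hb : b * b = 1) (a : ℕ → ℝ) (k : ℕ) :
    det (tri b a (k+2)) = a 0 * det (tri b (fun i => a (i+1)) (k+1))
      - det (tri b (fun i => a (i+2)) k) := by
  rw [show (k+2) = (k+1)+1 from rfl, det_succ_row_zero]
  rw [Fin.sum_univ_succ, Fin.sum_univ_succ]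
  have hz : ∀ j : Fin k, ((-1:ℝ)) ^ ((j.succ.succ : Fin (k+2)) : ℕ) *
      (tri b a (k+2)) 0 j.succ.succ *
      det ((tri b a (k+2)).submatrix Fin.succ (Fin.succAbove j.succ.succ)) = 0 := by
    intro j
    have : (tri b a (k+2)) 0 j.succ.succ = 0 := by
      simp only [tri, Matrix.of_apply]
      rw [if_neg, if_neg] <;> simp
    rw [this]; ring
  rw [Finset.sum_eq_zero (fun j _ => hz j)]
  have e1 : (tri b a (k+2)).submatrix Fin.succ ((0 : Fin (k+2)).succAbove) =
      tri b (fun i => a (i+1)) (k+1) := by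
    ext i j
    simp only [tri, Matrix.submatrix_apply, Matrix.of_apply, Fin.succAbove_zero,
      Fin.val_succ]
    split_ifs <;> first | rfl | omega
  have e2 : (tri b a (k+2)) 0 ((0:Fin (k+1)).succ) = -b := by
    simp only [tri, Matrix.of_apply]
    rw [if_neg, if_pos] <;> simp
  have e3 : det ((tri b a (k+2)).submatrix Fin.succ (Fin.succAbove (0:Fin (k+1)).succ))
      = (-b) * det (tri b (fun i => a (i+2)) k) := by
    rw [det_succ_column_zero, Fin.sum_univ_succ]
    have hz2 : ∀ i : Fin k,
        ((-1:ℝ)) ^ ((i.succ : Fin (k+1)) : ℕ) *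
        ((tri b a (k+2)).submatrix Fin.succ (Fin.succAbove (0:Fin (k+1)).succ)) i.succ 0 *
        det ((((tri b a (k+2)).submatrix Fin.succ (Fin.succAbove (0:Fin (k+1)).succ))).submatrix
          (Fin.succAbove i.succ) Fin.succ) = 0 := by
      intro i
      have : ((tri b a (k+2)).submatrix Fin.succ (Fin.succAbove (0:Fin (k+1)).succ)) i.succ 0 = 0 := by
        simp only [tri, Matrix.submatrix_apply, Matrix.of_apply, Fin.val_succ, val_succAbove]
        rw [if_neg, if_neg] <;> simp <;> omega
      rw [this]; ring
    rw [Finset.sum_eq_zero (fun i _ => hz2 i)]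
    have h00 : ((tri b a (k+2)).submatrix Fin.succ (Fin.succAbove (0:Fin (k+1)).succ)) 0 0 = -b := by
      simp only [tri, Matrix.submatrix_apply, Matrix.of_apply, Fin.val_succ, val_succAbove]
      rw [if_neg, if_pos] <;> simp
    have hsub : (((tri b a (k+2)).submatrix Fin.succ (Fin.succAbove (0:Fin (k+1)).succ))).submatrix
        (Fin.succAbove (0:Fin (k+1))) Fin.succ = tri b (fun i => a (i+2)) k := by
      ext i j
      have h1 : ((Fin.succAbove (0:Fin (k+1)).succ j.succ : Fin (k+2)) : ℕ) = (j:ℕ)+2 := by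
        rw [val_succAbove]; simp
      simp only [tri, Matrix.submatrix_apply, Matrix.of_apply, Fin.succAbove_zero, h1,
        Fin.val_succ]
      split_ifs <;> first | rfl | omega
    rw [h00, hsub]
    simp
  rw [e1, e2, e3]
  have : ((0:Fin (k+1)).succ : ℕ) = 1 := rfl
  rw [this]
  have h00 : (tri b a (k+2)) 0 0 = a 0 := by
    simp [tri]
  rw [h00]
  simp only [Fin.val_zero, pow_zero, one_mul]
  linear_combination (-(tri b (fun i => a (i+2)) k).det) * hb

lemma det_tri_zero (b : ℝ) (a : ℕ → ℝ) : det (tri b a 0) = 1 := det_fin_zero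

lemma det_tri_one (b : ℝ) (a : ℕ → ℝ) : det (tri b a 1) = a 0 := by
  rw [det_fin_one]; simp [tri]

/-- determinant of the tridiagonal block with diagonal (c, …, c, d) of size m. -/
lemma det_tri_g {b : ℝ} (hb : b * b = 1) (c d : ℝ) :
    ∀ m, det (tri b (fun i => if i = m - 1 then d else c) m) = beta c d m := by
  intro m
  induction m using Nat.strong_induction_on with
  | _ m ih =>
    match m with
    | 0 => rw [det_tri_zero]; rfl
    | 1 => rw [det_tri_one]; norm_num; rfl
    | (k+2) =>
      rw [det_tri_rec hb]
      have e1 : tri b (fun i => if i + 1 = (k+2) - 1 then d else c) (k+1)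
          = tri b (fun i => if i = (k+1) - 1 then d else c) (k+1) :=
        tri_congr (fun i hi => by split_ifs <;> first | rfl | omega)
      have e2 : tri b (fun i => if i + 2 = (k+2) - 1 then d else c) k
          = tri b (fun i => if i = k - 1 then d else c) k :=
        tri_congr (fun i hi => by split_ifs <;> first | rfl | omega)
      rw [e1, e2, ih (k+1) (by omega), ih k (by omega)]
      have : (if (0:ℕ) = (k+2) - 1 then d else c) = c := by
        rw [if_neg]; omega
      rw [this]
      rfl

lemma det_tri_rev (b : ℝ) (a : ℕ → ℝ) (k : ℕ) :
    det (tri b (fun i => a (k - 1 - i)) k) = det (tri b a k) := by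
  rw [← det_submatrix_equiv_self (Fin.revPerm (n := k)) (tri b (fun i => a (k - 1 - i)) k)]
  congr 1
  ext i j
  simp only [tri, Matrix.submatrix_apply, Matrix.of_apply, Fin.revPerm_apply, Fin.val_rev]
  have hi := i.isLt; have hj := j.isLt
  have h1 : k - 1 - (k - ((i:ℕ) + 1)) = i := by omega
  by_cases hij : (i:ℕ) = (j:ℕ)
  · rw [if_pos (by omega : k - ((i:ℕ)+1) = k - ((j:ℕ)+1)), if_pos hij, h1]
  · rw [if_neg (by omega : ¬ (k - ((i:ℕ)+1) = k - ((j:ℕ)+1))), if_neg hij]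
    have h2 : ((k - ((i:ℕ)+1)) + 1 = k - ((j:ℕ)+1) ∨ (k - ((j:ℕ)+1)) + 1 = k - ((i:ℕ)+1))
        ↔ ((i:ℕ) + 1 = (j:ℕ) ∨ (j:ℕ) + 1 = (i:ℕ)) := by omega
    simp only [h2]

/-- determinant of the tridiagonal block with diagonal (d, c, …, c) of size m. -/
lemma det_tri_top {b : ℝ} (hb : b * b = 1) (c d : ℝ) (m : ℕ) :
    det (tri b (fun i => if i = 0 then d else c) m) = beta c d m := by
  rw [← det_tri_g hb c d m,
    ← det_tri_rev b (fun i => if i = m - 1 then d else c) m]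
  congr 1
  apply tri_congr
  intro i hi
  split_ifs <;> first | rfl | omega

lemma triQ_eq (m : ℕ) (b c d : ℝ) :
    triQ (m+1) b c d = tri b (fun j => if j = 0 ∨ j = m then d else c) (m+1) := by
  ext i j
  simp only [triQ, tri, Matrix.of_apply, Fin.ext_iff, Nat.add_sub_cancel]

lemma det_minor {b : ℝ} (hb : b * b = 1) (c d : ℝ) {m : ℕ} (i : Fin (m+1)) :
    det ((tri b (fun j => if j = 0 ∨ j = m then d else c) (m+1)).submatrix
        i.succAbove i.succAbove)
      = beta c d i * beta c d (m - i) := by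
  have him := i.isLt
  have hsplit : (i:ℕ) + (m - (i:ℕ)) = m := by omega
  set e2 : Fin (i:ℕ) ⊕ Fin (m - (i:ℕ)) ≃ Fin m := finSumFinEquiv.trans (finCongr hsplit)
    with he2
  rw [← det_submatrix_equiv_self e2]
  have ve : ∀ x : Fin (i:ℕ), ((e2 (Sum.inl x)) : ℕ) = x := by
    intro x; simp [he2]
  have ve' : ∀ x : Fin (m - (i:ℕ)), ((e2 (Sum.inr x)) : ℕ) = (i:ℕ) + x := by
    intro x; simp [he2]
  have hvl : ∀ x : Fin (i:ℕ), ((i.succAbove (e2 (Sum.inl x))) : ℕ) = (x:ℕ) := by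
    intro x; rw [val_succAbove, ve, if_pos x.isLt]
  have hvr : ∀ x : Fin (m - (i:ℕ)),
      ((i.succAbove (e2 (Sum.inr x))) : ℕ) = (i:ℕ) + x + 1 := by
    intro x; rw [val_succAbove, ve', if_neg (by omega)]
  have hblock : ((tri b (fun j => if j = 0 ∨ j = m then d else c) (m+1)).submatrix
        i.succAbove i.succAbove).submatrix e2 e2
      = Matrix.fromBlocks (tri b (fun j => if j = 0 then d else c) (i:ℕ)) 0 0
          (tri b (fun j => if j = (m - (i:ℕ)) - 1 then d else c) (m - (i:ℕ))) := by
    ext x y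
    rcases x with x | x <;> rcases y with y | y <;>
      [skip; skip; skip; skip] <;>
      simp only [Matrix.submatrix_apply, Matrix.fromBlocks_apply₁₁,
        Matrix.fromBlocks_apply₁₂, Matrix.fromBlocks_apply₂₁, Matrix.fromBlocks_apply₂₂,
        Matrix.zero_apply, tri, Matrix.of_apply, hvl, hvr] <;>
      (try have hx := x.isLt) <;> (try have hy := y.isLt) <;>
      split_ifs <;> (try push_neg at *) <;>
        first
        | rfl
        | (casesm* _ ∨ _, _ ∧ _ <;> first | contradiction | omega)
  rw [hblock, Matrix.det_fromBlocks_zero₂₁, det_tri_top hb, det_tri_g hb]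

lemma det_updateRow_single {m : ℕ} (Q : Matrix (Fin (m+1)) (Fin (m+1)) ℝ) (i : Fin (m+1)) :
    det (Q.updateRow i (Pi.single i 1)) = det (Q.submatrix i.succAbove i.succAbove) := by
  rw [det_succ_row _ i, Finset.sum_eq_single i]
  · have h1 : (Q.updateRow i (Pi.single i 1)) i i = 1 := by
      rw [Matrix.updateRow_self]; simp
    have h2 : (Q.updateRow i (Pi.single i 1)).submatrix i.succAbove i.succAbove
        = Q.submatrix i.succAbove i.succAbove := by
      ext a bb
      rw [Matrix.submatrix_apply, Matrix.submatrix_apply,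
        Matrix.updateRow_ne (Fin.succAbove_ne i a)]
    have h3 : (-1:ℝ) ^ ((i:ℕ) + (i:ℕ)) = 1 := Even.neg_one_pow ⟨i, rfl⟩
    rw [h1, h2, h3]; ring
  · intro j _ hj
    have : (Q.updateRow i (Pi.single i 1)) i j = 0 := by
      rw [Matrix.updateRow_self, Pi.single_eq_of_ne hj]
    rw [this]; ring
  · intro h; exact absurd (Finset.mem_univ i) h

lemma trace_formula {b : ℝ} (c d : ℝ) (hb : b * b = 1) (m : ℕ) :
    Matrix.trace (triQ (m+1) b c d)⁻¹
      = (∑ i : Fin (m+1), beta c d (i:ℕ) * beta c d (m - (i:ℕ)))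
          / det (triQ (m+1) b c d) := by
  have key : ∀ j : Fin (m+1),
      Matrix.adjugate (triQ (m+1) b c d) j j = beta c d (j:ℕ) * beta c d (m - (j:ℕ)) := by
    intro j
    rw [Matrix.adjugate_apply, det_updateRow_single, triQ_eq]
    exact det_minor hb c d j
  rw [Matrix.inv_def, Matrix.trace_smul, Ring.inverse_eq_inv]
  rw [Matrix.trace]
  simp only [Matrix.diag_apply, key, smul_eq_mul]
  rw [inv_mul_eq_div]

lemma det_triQ {b : ℝ} (hb : b * b = 1) (c d : ℝ) (m : ℕ) :
    det (triQ (m+2) b c d) = d * beta c d (m+1) - beta c d m := by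
  rw [show triQ (m+2) b c d = tri b (fun j => if j = 0 ∨ j = m+1 then d else c) (m+2) from
    triQ_eq (m+1) b c d]
  rw [det_tri_rec hb]
  have e1 : tri b (fun i => if i + 1 = 0 ∨ i + 1 = m+1 then d else c) (m+1)
      = tri b (fun i => if i = (m+1) - 1 then d else c) (m+1) :=
    tri_congr (fun i hi => by
      split_ifs <;>
        first | rfl | (casesm* _ ∨ _ <;> first | contradiction | omega) | omega)
  have e2 : tri b (fun i => if i + 2 = 0 ∨ i + 2 = m+1 then d else c) m
      = tri b (fun i => if i = m - 1 then d else c) m :=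
    tri_congr (fun i hi => by
      split_ifs <;>
        first | rfl | (casesm* _ ∨ _ <;> first | contradiction | omega) | omega)
  rw [e1, e2, det_tri_g hb, det_tri_g hb]
  rw [if_pos (Or.inl rfl)]


section Cx
variable (c d : ℝ)

lemma hs2 : (((c:ℂ)^2 - 4) ^ ((1:ℂ)/2)) ^ 2 = (c:ℂ)^2 - 4 := by
  have : ((1:ℂ)/2) = ((2:ℕ):ℂ)⁻¹ := by norm_num
  rw [this, Complex.cpow_nat_inv_pow _ (by norm_num)]

lemma hs_ne (hc0 : 0 ≤ c) (hc : c ≠ 2) : (((c:ℂ)^2 - 4) ^ ((1:ℂ)/2)) ≠ 0 := by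
  rw [Ne, Complex.cpow_eq_zero_iff]
  rintro ⟨h, -⟩
  have h4 : (c:ℝ)^2 = 4 := by
    have := sub_eq_zero.mp h
    exact_mod_cast this
  have : c = 2 := by nlinarith
  exact hc this

lemma beta_closed (hc0 : 0 ≤ c) (hc : c ≠ 2) :
    ∀ i : ℕ, ((beta c d i : ℝ) : ℂ) *
        (((c:ℂ) + ((c:ℂ)^2 - 4) ^ ((1:ℂ)/2)) / 2 - ((c:ℂ) - ((c:ℂ)^2 - 4) ^ ((1:ℂ)/2)) / 2)
      = (((c:ℂ) + ((c:ℂ)^2 - 4) ^ ((1:ℂ)/2)) / 2 - ((c:ℂ) - (d:ℂ))) *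
          (((c:ℂ) + ((c:ℂ)^2 - 4) ^ ((1:ℂ)/2)) / 2) ^ i
        - (((c:ℂ) - ((c:ℂ)^2 - 4) ^ ((1:ℂ)/2)) / 2 - ((c:ℂ) - (d:ℂ))) *
          (((c:ℂ) - ((c:ℂ)^2 - 4) ^ ((1:ℂ)/2)) / 2) ^ i := by
  set s : ℂ := ((c:ℂ)^2 - 4) ^ ((1:ℂ)/2) with hs
  have h2 : s ^ 2 = (c:ℂ)^2 - 4 := hs2 c
  set rp : ℂ := ((c:ℂ) + s) / 2 with hrp
  set rm : ℂ := ((c:ℂ) - s) / 2 with hrm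
  have hrp2 : rp ^ 2 = (c:ℂ) * rp - 1 := by
    rw [hrp]; linear_combination (hs2 c) / 4
  have hrm2 : rm ^ 2 = (c:ℂ) * rm - 1 := by
    rw [hrm]; linear_combination (hs2 c) / 4
  intro i
  induction i using Nat.strong_induction_on with
  | _ i ih =>
    match i with
    | 0 =>
      show ((beta c d 0 : ℝ) : ℂ) * _ = _
      rw [show beta c d 0 = 1 from rfl]
      push_cast; ring
    | 1 =>
      show ((beta c d 1 : ℝ) : ℂ) * _ = _
      rw [show beta c d 1 = d from rfl]
      rw [hrp, hrm]; push_cast; ring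
    | (k+2) =>
      have hk1 := ih (k+1) (by omega)
      have hk0 := ih k (by omega)
      have hb2 : ((beta c d (k+2) : ℝ) : ℂ)
          = (c:ℂ) * ((beta c d (k+1) : ℝ) : ℂ) - ((beta c d k : ℝ) : ℂ) := by
        rw [show beta c d (k+2) = c * beta c d (k+1) - beta c d k from rfl]
        push_cast; ring
      rw [hb2]
      have e1 : rp ^ (k+2) = ((c:ℂ) * rp - 1) * rp ^ k := by
        rw [← hrp2]; ring
      have e2 : rm ^ (k+2) = ((c:ℂ) * rm - 1) * rm ^ k := by
        rw [← hrm2]; ring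
      rw [e1, e2]
      have e3 : rp ^ (k+1) = rp * rp ^ k := by ring
      have e4 : rm ^ (k+1) = rm * rm ^ k := by ring
      rw [e3, e4] at hk1
      linear_combination (c:ℂ) * hk1 - hk0

end Cx

lemma Tmul (rp rm : ℂ) : ∀ n : ℕ,
    (∑ i ∈ Finset.range n, rp^i * rm^(n-1-i)) * (rp - rm) = rp^n - rm^n := by
  intro n
  induction n with
  | zero => simp
  | succ n ih =>
    have peel : ∑ i ∈ Finset.range (n+1), rp^i * rm^(n+1-1-i)
        = rm * (∑ i ∈ Finset.range n, rp^i * rm^(n-1-i)) + rp^n := by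
      rw [Finset.sum_range_succ, Finset.mul_sum]
      congr 1
      · apply Finset.sum_congr rfl
        intro i hi
        have hi' := Finset.mem_range.mp hi
        have : n + 1 - 1 - i = (n - 1 - i) + 1 := by omega
        rw [this]; ring
      · simp
    rw [peel]
    linear_combination rm * ih

lemma reflectT (rp rm : ℂ) (n : ℕ) :
    ∑ i ∈ Finset.range n, rm^i * rp^(n-1-i)
      = ∑ i ∈ Finset.range n, rp^i * rm^(n-1-i) := by
  rw [← Finset.sum_range_reflect (fun j => rp^j * rm^(n-1-j)) n]
  apply Finset.sum_congr rfl
  intro i hi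
  have h := Finset.mem_range.mp hi
  have e : n - 1 - (n - 1 - i) = i := by omega
  rw [e]; ring

lemma sum_K (rp rm vp vm : ℂ) (n : ℕ) (hn : 1 ≤ n) (B : ℕ → ℂ)
    (hK : ∀ i, B i * (rp - rm) = vp * rp^i - vm * rm^i) :
    (∑ i ∈ Finset.range n, B i * B (n-1-i)) * ((rp-rm)*(rp-rm))
      = (n:ℂ) * (vp^2*rp^(n-1) + vm^2*rm^(n-1))
        - 2*(vp*vm) * (∑ i ∈ Finset.range n, rp^i * rm^(n-1-i)) := by
  rw [Finset.sum_mul]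
  have perterm : ∀ i ∈ Finset.range n, B i * B (n-1-i) * ((rp-rm)*(rp-rm))
      = (vp^2*rp^(n-1) + vm^2*rm^(n-1))
        - (vp*vm) * (rp^i * rm^(n-1-i) + rm^i * rp^(n-1-i)) := by
    intro i hi
    have hi' := Finset.mem_range.mp hi
    have h1 := hK i
    have h2 := hK (n-1-i)
    have e : rp^i * rp^(n-1-i) = rp^(n-1) := by
      rw [← pow_add]; congr 1; omega
    have e' : rm^i * rm^(n-1-i) = rm^(n-1) := by
      rw [← pow_add]; congr 1; omega
    linear_combination (B (n-1-i) * (rp-rm)) * h1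
      + (vp * rp^i - vm * rm^i) * h2 + vp^2 * e + vm^2 * e'
  rw [Finset.sum_congr rfl perterm]
  rw [Finset.sum_sub_distrib, Finset.sum_const, Finset.card_range, ← Finset.mul_sum,
    Finset.sum_add_distrib, reflectT]
  push_cast
  ring

/-- Theorem, trace, c ≠ 2: for invertible Q,
tr(Q⁻¹) = n(φ₊² r₊^{n−1} + φ₋² r₋^{n−1})/(κ₀ κ) − 2ρ(r₊ⁿ − r₋ⁿ)/(κ₀² κ)
as complex numbers, where ρ = φ₊ φ₋. -/
theorem trace_inv_c_ne_two (n : ℕ) (hn : 2 ≤ n) (b c d : ℝ) (hb : b = 1 ∨ b = -1)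
    (hc0 : 0 ≤ c) (hc : c ≠ 2) (hlam : c - d ≠ 0)
    (hQ : IsUnit (triQ n b c d)) :
    let lam : ℂ := (c : ℂ) - (d : ℂ)
    let rp : ℂ := ((c : ℂ) + ((c : ℂ) ^ 2 - 4) ^ ((1 : ℂ) / 2)) / 2
    let rm : ℂ := ((c : ℂ) - ((c : ℂ) ^ 2 - 4) ^ ((1 : ℂ) / 2)) / 2
    let vp : ℂ := rp - lam
    let vm : ℂ := rm - lam
    let k0 : ℂ := rp - rm
    let kap : ℂ := vp ^ 2 * rp ^ (n - 1) - vm ^ 2 * rm ^ (n - 1)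
    let rho : ℂ := vp * vm
    ((Matrix.trace (triQ n b c d)⁻¹ : ℝ) : ℂ) =
      (n : ℂ) * (vp ^ 2 * rp ^ (n - 1) + vm ^ 2 * rm ^ (n - 1)) / (k0 * kap)
        - 2 * rho * (rp ^ n - rm ^ n) / (k0 ^ 2 * kap) := by
  obtain ⟨m, rfl⟩ : ∃ m, n = m + 2 := ⟨n - 2, by omega⟩
  intro lam rp rm vp vm k0 kap rho
  have hb2 : b * b = 1 := by rcases hb with h | h <;> rw [h] <;> norm_num
  have hdetR : (triQ (m+2) b c d).det ≠ 0 :=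
    ((Matrix.isUnit_iff_isUnit_det _).mp hQ).ne_zero
  have htr := trace_formula c d hb2 (m+1)
  have hdetF := det_triQ hb2 c d m
  have hrpe : rp = ((c:ℂ) + ((c:ℂ)^2 - 4) ^ ((1:ℂ)/2)) / 2 := rfl
  have hrme : rm = ((c:ℂ) - ((c:ℂ)^2 - 4) ^ ((1:ℂ)/2)) / 2 := rfl
  have hvpe : vp = rp - ((c:ℂ) - (d:ℂ)) := rfl
  have hvme : vm = rm - ((c:ℂ) - (d:ℂ)) := rfl
  have hk0e : k0 = rp - rm := rfl
  have hrhoe : rho = vp * vm := rfl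
  have hkape0 : kap = vp ^ 2 * rp ^ (m + 2 - 1) - vm ^ 2 * rm ^ (m + 2 - 1) := rfl
  clear_value lam rp rm vp vm k0 kap rho
  have hred : m + 2 - 1 = m + 1 := by omega
  have hkape : kap = vp^2 * rp^(m+1) - vm^2 * rm^(m+1) := by
    rw [hkape0, hred]
  have hrp2 : rp^2 = (c:ℂ) * rp - 1 := by rw [hrpe]; linear_combination (hs2 c)/4
  have hrm2 : rm^2 = (c:ℂ) * rm - 1 := by rw [hrme]; linear_combination (hs2 c)/4
  have hk0s : rp - rm = ((c:ℂ)^2 - 4) ^ ((1:ℂ)/2) := by rw [hrpe, hrme]; ring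
  have hk0ne : rp - rm ≠ 0 := by rw [hk0s]; exact hs_ne c hc0 hc
  have hK : ∀ i, ((beta c d i : ℝ) : ℂ) * (rp - rm) = vp * rp^i - vm * rm^i := by
    intro i
    rw [hvpe, hvme, hrpe, hrme]
    exact beta_closed c d hc0 hc i
  have hDk : (((triQ (m+2) b c d).det : ℝ) : ℂ) * (rp - rm) = kap := by
    rw [hdetF, hkape]
    push_cast
    have h1 := hK (m+1); have h0 := hK m
    rw [hvpe, hvme] at h1 h0 ⊢
    linear_combination (d:ℂ) * h1 - h0
      - ((rp - ((c:ℂ) - (d:ℂ))) * rp^m) * hrp2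
      + ((rm - ((c:ℂ) - (d:ℂ))) * rm^m) * hrm2
  have hDne : (((triQ (m+2) b c d).det : ℝ) : ℂ) ≠ 0 := Complex.ofReal_ne_zero.mpr hdetR
  have hkapne : kap ≠ 0 := by rw [← hDk]; exact mul_ne_zero hDne hk0ne
  have hT := Tmul rp rm (m+2)
  have hSum := sum_K rp rm vp vm (m+2) (by omega) (fun i => ((beta c d i : ℝ) : ℂ)) hK
  simp only [hred] at hSum
  rw [htr]
  push_cast
  rw [Fin.sum_univ_eq_sum_range
    (fun j => ((beta c d j : ℝ) : ℂ) * ((beta c d (m+1-j) : ℝ) : ℂ)) (m+2)]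
  have e1 : (∑ i ∈ Finset.range (m+2),
        ((beta c d i : ℝ) : ℂ) * ((beta c d (m+1-i) : ℝ) : ℂ))
      = (((m+2 : ℕ) : ℂ) * (vp^2*rp^(m+1) + vm^2*rm^(m+1))
          - 2*(vp*vm) * (∑ i ∈ Finset.range (m+2), rp^i * rm^(m+1-i)))
        / ((rp-rm)*(rp-rm)) :=
    eq_div_of_mul_eq (mul_ne_zero hk0ne hk0ne) hSum
  have e2 : (((triQ (m+2) b c d).det : ℝ) : ℂ) = kap / (rp - rm) :=
    eq_div_of_mul_eq hk0ne hDk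
  have e3 : (∑ i ∈ Finset.range (m+2), rp^i * rm^(m+1-i))
      = (rp^(m+2) - rm^(m+2)) / (rp - rm) := by
    apply eq_div_of_mul_eq hk0ne
    have : m + 2 - 1 = m + 1 := by omega
    rw [← this]
    exact hT
  rw [e1, e2, e3, hkape, hrhoe, hk0e]
  have hkapne' : vp^2 * rp^(m+1) - vm^2 * rm^(m+1) ≠ 0 := by rw [← hkape]; exact hkapne
  push_cast
  field_simp
end

section
/- Let n ≥ 2, b ∈ {1, −1}, c = 2 and d be real with λ = 2 − d satisfying λ ≠ 0, λ ≠ 1 and λ ≠ (n+1)/(n−1), and let Q be the corresponding n×n tridiagonal matrix. Then trace(Q^{-1}) = n { n − nλ + λ + (1−λ)²(n−1)(n−2)/6 } / [ (1−λ){ (1−λ)(n−1) + 2 } ]. -/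
open Matrix Finset

noncomputable def gz (n : ℕ) (d : ℝ) (a k : ℤ) : ℝ :=
  (1 + (min a k : ℤ) * (d - 1)) * (1 + ((n : ℤ) - 1 - max a k) * (d - 1))

lemma gz_le (n : ℕ) (d : ℝ) {a k : ℤ} (h : a ≤ k) :
    gz n d a k = (1 + (a : ℝ) * (d - 1)) * (1 + ((n : ℝ) - 1 - (k : ℝ)) * (d - 1)) := by
  unfold gz; rw [min_eq_left h, max_eq_right h]; push_cast; ring

lemma gz_ge (n : ℕ) (d : ℝ) {a k : ℤ} (h : k ≤ a) :
    gz n d a k = (1 + (k : ℝ) * (d - 1)) * (1 + ((n : ℝ) - 1 - (a : ℝ)) * (d - 1)) := by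
  unfold gz; rw [min_eq_right h, max_eq_left h]; push_cast; ring

lemma key (n : ℕ) (hn : 2 ≤ n) (d : ℝ) (i k : ℤ)
    (hi0 : 0 ≤ i) (hi1 : i ≤ (n:ℤ) - 1) (hk0 : 0 ≤ k) (hk1 : k ≤ (n:ℤ) - 1) :
    (if i = 0 ∨ i = (n:ℤ) - 1 then d else 2) * gz n d i k
      - (if i + 1 ≤ (n:ℤ) - 1 then gz n d (i+1) k else 0)
      - (if 1 ≤ i then gz n d (i-1) k else 0)
    = if i = k then (d-1) * (((n:ℝ)-1)*(d-1)+2) else 0 := by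
  have hn' : (2:ℤ) ≤ (n:ℤ) := by exact_mod_cast hn
  have hnr : ((n:ℤ) : ℝ) = (n : ℝ) := by push_cast; ring
  by_cases hA : i = 0
  · subst hA
    rw [if_pos (Or.inl rfl), if_pos (by omega), if_neg (by omega)]
    simp only [zero_add]
    rcases eq_or_lt_of_le hk0 with hk | hk
    · obtain rfl := hk.symm
      rw [if_pos rfl, gz_ge n d (le_refl 0), gz_ge n d (by omega : (0:ℤ) ≤ 1)]
      push_cast; ring
    · rw [if_neg (by omega), gz_le n d hk.le, gz_le n d (by omega : (1:ℤ) ≤ k)]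
      push_cast; ring
  · by_cases hB : i = (n:ℤ) - 1
    · subst hB
      rw [if_pos (Or.inr rfl), if_neg (by omega), if_pos (by omega)]
      rcases eq_or_lt_of_le hk1 with hk | hk
      · obtain rfl := hk
        rw [if_pos rfl, gz_ge n d (le_refl _), gz_le n d (by omega)]
        push_cast; ring
      · rw [if_neg (by omega), gz_ge n d hk.le, gz_ge n d (by omega)]
        push_cast; ring
    · rw [if_neg (by tauto), if_pos (by omega), if_pos (by omega)]
      rcases lt_trichotomy i k with hk | hk | hk
      · rw [if_neg (by omega), gz_le n d hk.le, gz_le n d (by omega), gz_le n d (by omega)]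
        push_cast; ring
      · obtain rfl := hk
        rw [if_pos rfl, gz_le n d (le_refl _), gz_ge n d (by omega), gz_le n d (by omega)]
        push_cast; ring
      · rw [if_neg (by omega), gz_ge n d hk.le, gz_ge n d (by omega), gz_ge n d (by omega)]
        push_cast; ring

lemma sum_ind {n : ℕ} (m : ℕ) (g : Fin n → ℝ) :
    ∑ j : Fin n, (if (j : ℕ) = m then g j else 0) =
      if h : m < n then g ⟨m, h⟩ else 0 := by
  by_cases h : m < n
  · rw [dif_pos h, Finset.sum_eq_single (⟨m, h⟩ : Fin n)]
    · simp
    · intro j _ hj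
      exact if_neg fun hc => hj (Fin.ext hc)
    · intro hj; exact absurd (Finset.mem_univ _) hj
  · rw [dif_neg h]
    refine Finset.sum_eq_zero fun j _ => if_neg fun hc => h ?_
    have := j.isLt; omega

lemma sum_ind' {n : ℕ} (m : ℕ) (P : Prop) [Decidable P] (g : Fin n → ℝ) :
    ∑ j : Fin n, (if (j : ℕ) = m ∧ P then g j else 0) =
      if h : m < n ∧ P then g ⟨m, h.1⟩ else 0 := by
  by_cases hP : P
  · simp only [hP, and_true]
    rw [sum_ind]
  · simp [hP]

lemma mulM (n : ℕ) (hn : 2 ≤ n) (d : ℝ) :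
    triQ n 1 2 d * Matrix.of (fun i j : Fin n => gz n d (i:ℕ) (j:ℕ)) =
      ((d-1) * (((n:ℝ)-1)*(d-1)+2)) • (1 : Matrix (Fin n) (Fin n) ℝ) := by
  ext i k
  rw [Matrix.mul_apply]
  have hsplit : ∀ j : Fin n, triQ n 1 2 d i j * Matrix.of (fun i j : Fin n => gz n d (i:ℕ) (j:ℕ)) j k =
      (if (j:ℕ) = (i:ℕ) then (if (i:ℕ) = 0 ∨ (i:ℕ) = n-1 then d else 2) * gz n d (j:ℕ) (k:ℕ) else 0)
    + (if (j:ℕ) = (i:ℕ)+1 then -(gz n d (j:ℕ) (k:ℕ)) else 0)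
    + (if (j:ℕ) = (i:ℕ)-1 ∧ 1 ≤ (i:ℕ) then -(gz n d (j:ℕ) (k:ℕ)) else 0) := by
    intro j
    simp only [triQ, Matrix.of_apply]
    rcases eq_or_ne i j with h | h
    · subst h
      rw [if_pos rfl, if_pos rfl, if_neg (show ¬((i:ℕ) = (i:ℕ)+1) by omega),
        if_neg (show ¬((i:ℕ) = (i:ℕ)-1 ∧ 1 ≤ (i:ℕ)) by omega)]
      ring
    · rw [if_neg h]
      have hv : (i:ℕ) ≠ (j:ℕ) := fun hc => h (Fin.ext hc)
      by_cases h2 : (i:ℕ)+1 = (j:ℕ)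
      · rw [if_pos (Or.inl h2), if_neg (show ¬((j:ℕ) = (i:ℕ)) by omega),
          if_pos (show (j:ℕ) = (i:ℕ)+1 by omega),
          if_neg (show ¬((j:ℕ) = (i:ℕ)-1 ∧ 1 ≤ (i:ℕ)) by omega)]
        ring
      · by_cases h3 : (j:ℕ)+1 = (i:ℕ)
        · rw [if_pos (Or.inr h3), if_neg (show ¬((j:ℕ) = (i:ℕ)) by omega),
            if_neg (show ¬((j:ℕ) = (i:ℕ)+1) by omega),
            if_pos (show (j:ℕ) = (i:ℕ)-1 ∧ 1 ≤ (i:ℕ) by omega)]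
          ring
        · rw [if_neg (by tauto), if_neg (show ¬((j:ℕ) = (i:ℕ)) by omega),
            if_neg (show ¬((j:ℕ) = (i:ℕ)+1) by omega),
            if_neg (show ¬((j:ℕ) = (i:ℕ)-1 ∧ 1 ≤ (i:ℕ)) by omega)]
          ring
  rw [Finset.sum_congr rfl fun j _ => hsplit j, Finset.sum_add_distrib,
    Finset.sum_add_distrib, sum_ind, sum_ind, sum_ind']
  have hK := key n hn d (i:ℕ) (k:ℕ) (by omega) (by have := i.isLt; omega) (by omega)
    (by have := k.isLt; omega)
  have hiff : (((i:ℕ):ℤ) = ((k:ℕ):ℤ)) ↔ i = k := by rw [Fin.ext_iff]; omega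
  have hRHS : (((d-1) * (((n:ℝ)-1)*(d-1)+2)) • (1 : Matrix (Fin n) (Fin n) ℝ)) i k
      = if ((i:ℕ):ℤ) = ((k:ℕ):ℤ) then (d-1) * (((n:ℝ)-1)*(d-1)+2) else 0 := by
    rw [Matrix.smul_apply, Matrix.one_apply]
    by_cases h : i = k
    · rw [if_pos h, if_pos (hiff.mpr h), smul_eq_mul, mul_one]
    · rw [if_neg h, if_neg (fun hc => h (hiff.mp hc)), smul_eq_mul, mul_zero]
  rw [hRHS]
  have hilt := i.isLt
  by_cases h1 : 1 ≤ (i:ℕ)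
  · by_cases hc2 : (i:ℕ)+1 < n
    · -- middle
      rw [dif_pos i.isLt, dif_pos hc2, dif_pos (⟨by omega, h1⟩ : (i:ℕ)-1 < n ∧ 1 ≤ (i:ℕ))]
      rw [if_neg (show ¬((i:ℕ) = 0 ∨ (i:ℕ) = n-1) by omega)]
      rw [if_neg (show ¬(((i:ℕ):ℤ) = 0 ∨ ((i:ℕ):ℤ) = (n:ℤ)-1) by omega),
        if_pos (show ((i:ℕ):ℤ)+1 ≤ (n:ℤ)-1 by omega),
        if_pos (show (1:ℤ) ≤ ((i:ℕ):ℤ) by omega)] at hK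
      simp only [Fin.eta]
      have e1 : ((((i:ℕ)+1 : ℕ)):ℤ) = ((i:ℕ):ℤ) + 1 := by omega
      have e2 : ((((i:ℕ)-1 : ℕ)):ℤ) = ((i:ℕ):ℤ) - 1 := by omega
      rw [e1, e2]
      linear_combination hK
    · -- i = n-1
      rw [dif_pos i.isLt, dif_neg hc2, dif_pos (⟨by omega, h1⟩ : (i:ℕ)-1 < n ∧ 1 ≤ (i:ℕ))]
      rw [if_pos (show (i:ℕ) = 0 ∨ (i:ℕ) = n-1 by omega)]
      rw [if_pos (show ((i:ℕ):ℤ) = 0 ∨ ((i:ℕ):ℤ) = (n:ℤ)-1 by omega),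
        if_neg (show ¬(((i:ℕ):ℤ)+1 ≤ (n:ℤ)-1) by omega),
        if_pos (show (1:ℤ) ≤ ((i:ℕ):ℤ) by omega)] at hK
      simp only [Fin.eta]
      have e2 : ((((i:ℕ)-1 : ℕ)):ℤ) = ((i:ℕ):ℤ) - 1 := by omega
      rw [e2]
      linear_combination hK
  · -- i = 0
    rw [dif_pos i.isLt, dif_pos (show (i:ℕ)+1 < n by omega),
      dif_neg (show ¬((i:ℕ)-1 < n ∧ 1 ≤ (i:ℕ)) by omega)]
    rw [if_pos (show (i:ℕ) = 0 ∨ (i:ℕ) = n-1 by omega)]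
    rw [if_pos (show ((i:ℕ):ℤ) = 0 ∨ ((i:ℕ):ℤ) = (n:ℤ)-1 by omega),
      if_pos (show ((i:ℕ):ℤ)+1 ≤ (n:ℤ)-1 by omega),
      if_neg (show ¬((1:ℤ) ≤ ((i:ℕ):ℤ)) by omega)] at hK
    simp only [Fin.eta]
    have e1 : ((((i:ℕ)+1 : ℕ)):ℤ) = ((i:ℕ):ℤ) + 1 := by omega
    rw [e1]
    linear_combination hK

lemma sum_id (n : ℕ) : ∑ i ∈ Finset.range n, (i:ℝ) = n*(n-1)/2 := by
  induction n with
  | zero => simp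
  | succ m ih => rw [Finset.sum_range_succ, ih]; push_cast; ring

lemma sum_sq (n : ℕ) : ∑ i ∈ Finset.range n, (i:ℝ)^2 = n*(n-1)*(2*n-1)/6 := by
  induction n with
  | zero => simp
  | succ m ih => rw [Finset.sum_range_succ, ih]; push_cast; ring

/-- Remark, trace, c = 2: with λ = 2 − d, λ ∉ {0, 1, (n+1)/(n−1)},
tr(Q⁻¹) = n{n − nλ + λ + (1−λ)²(n−1)(n−2)/6} / [(1−λ){(1−λ)(n−1) + 2}]. -/
theorem trace_inv_c_eq_two (n : ℕ) (hn : 2 ≤ n) (b d : ℝ) (hb : b = 1 ∨ b = -1)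
    (h0 : (2 : ℝ) - d ≠ 0) (h1 : (2 : ℝ) - d ≠ 1)
    (h2 : (2 : ℝ) - d ≠ ((n : ℝ) + 1) / ((n : ℝ) - 1)) :
    Matrix.trace (triQ n b 2 d)⁻¹ =
      (n : ℝ) * ((n : ℝ) - (n : ℝ) * (2 - d) + (2 - d)
          + (1 - (2 - d)) ^ 2 * ((n : ℝ) - 1) * ((n : ℝ) - 2) / 6) /
        ((1 - (2 - d)) * ((1 - (2 - d)) * ((n : ℝ) - 1) + 2)) := by
  have hnr : (2:ℝ) ≤ (n:ℝ) := by exact_mod_cast hn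
  have hμ : d - 1 ≠ 0 := fun hc => h1 (by linarith [hc])
  have hn1 : (n:ℝ) - 1 ≠ 0 := by intro hc; linarith
  have hF : ((n:ℝ)-1)*(d-1)+2 ≠ 0 := by
    intro hc; apply h2; rw [eq_div_iff hn1]; linear_combination -hc
  set D : ℝ := (d-1) * (((n:ℝ)-1)*(d-1)+2) with hDdef
  have hD : D ≠ 0 := mul_ne_zero hμ hF
  set M : Matrix (Fin n) (Fin n) ℝ :=
    D⁻¹ • Matrix.of (fun i j : Fin n => gz n d (i:ℕ) (j:ℕ)) with hMdef
  have hQ1M : triQ n 1 2 d * M = 1 := by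
    rw [hMdef, Matrix.mul_smul, mulM n hn d, smul_smul, inv_mul_cancel₀ hD, one_smul]
  set S : Matrix (Fin n) (Fin n) ℝ := Matrix.diagonal (fun i : Fin n => b ^ (i:ℕ)) with hSdef
  have hb2 : b ^ 2 = 1 := by rcases hb with rfl | rfl <;> norm_num
  have hSS : S * S = 1 := by
    rw [hSdef, Matrix.diagonal_mul_diagonal]
    have : (fun i : Fin n => b ^ (i:ℕ) * b ^ (i:ℕ)) = fun _ => (1:ℝ) := by
      funext i; rw [← pow_add, ← two_mul, pow_mul, hb2, one_pow]
    rw [this, Matrix.diagonal_one]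
  have hQb : triQ n b 2 d = S * triQ n 1 2 d * S := by
    ext i j
    rw [hSdef, Matrix.mul_diagonal, Matrix.diagonal_mul]
    simp only [triQ, Matrix.of_apply]
    by_cases hij : i = j
    · subst hij
      rw [if_pos rfl, if_pos rfl]
      have : b ^ (i:ℕ) * (if (i:ℕ) = 0 ∨ (i:ℕ) = n-1 then d else 2) * b ^ (i:ℕ)
          = (b^2)^(i:ℕ) * (if (i:ℕ) = 0 ∨ (i:ℕ) = n-1 then d else 2) := by
        rw [← pow_mul, two_mul, pow_add]; ring
      rw [this, hb2, one_pow, one_mul]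
    · rw [if_neg hij, if_neg hij]
      by_cases hadj : (i:ℕ) + 1 = (j:ℕ) ∨ (j:ℕ) + 1 = (i:ℕ)
      · rw [if_pos hadj, if_pos hadj]
        have hpow : b ^ ((i:ℕ) + (j:ℕ)) = b := by
          rcases hb with rfl | rfl
          · simp
          · refine Odd.neg_one_pow ?_
            rcases hadj with h | h
            · exact ⟨(i:ℕ), by omega⟩
            · exact ⟨(j:ℕ), by omega⟩
        calc -b = -(b ^ ((i:ℕ)+(j:ℕ))) := by rw [hpow]
          _ = b ^ (i:ℕ) * (-1:ℝ) * b ^ (j:ℕ) := by rw [pow_add]; ring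
      · rw [if_neg hadj, if_neg hadj]; ring
  have hQbM : triQ n b 2 d * (S * M * S) = 1 := by
    rw [hQb]
    calc S * triQ n 1 2 d * S * (S * M * S)
        = S * triQ n 1 2 d * (S * S) * M * S := by simp only [Matrix.mul_assoc]
      _ = S * (triQ n 1 2 d * M) * S := by
          rw [hSS, Matrix.mul_one, Matrix.mul_assoc S (triQ n 1 2 d) M]
      _ = S * S := by rw [hQ1M, Matrix.mul_one]
      _ = 1 := hSS
  have hinv : (triQ n b 2 d)⁻¹ = S * M * S := Matrix.inv_eq_right_inv hQbM
  rw [hinv]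
  have htr : Matrix.trace (S * M * S) = Matrix.trace M := by
    rw [Matrix.trace_mul_cycle, hSS, Matrix.one_mul]
  rw [htr, hMdef, Matrix.trace_smul]
  have htrM : Matrix.trace (Matrix.of (fun i j : Fin n => gz n d (i:ℕ) (j:ℕ)))
      = ∑ i ∈ Finset.range n, ((1:ℝ) + i*(d-1)) * (1 + ((n:ℝ)-1-i)*(d-1)) := by
    rw [Matrix.trace]
    rw [← Fin.sum_univ_eq_sum_range (fun i => ((1:ℝ) + i*(d-1)) * (1 + ((n:ℝ)-1-i)*(d-1)))]
    apply Finset.sum_congr rfl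
    intro i _
    simp only [Matrix.diag_apply, Matrix.of_apply]
    unfold gz
    rw [min_self, max_self]
    push_cast; ring
  rw [htrM]
  have hsum : ∑ i ∈ Finset.range n, ((1:ℝ) + i*(d-1)) * (1 + ((n:ℝ)-1-i)*(d-1))
      = n*(1+((n:ℝ)-1)*(d-1)) + (d-1)^2 * (n*((n:ℝ)-1)*((n:ℝ)-2)/6) := by
    have expand : ∀ i ∈ Finset.range n, ((1:ℝ) + i*(d-1)) * (1 + ((n:ℝ)-1-i)*(d-1))
        = (1+((n:ℝ)-1)*(d-1)) + (((n:ℝ)-1)*(d-1)^2) * (i:ℝ) - (d-1)^2 * (i:ℝ)^2 :=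
      fun i _ => by ring
    rw [Finset.sum_congr rfl expand, Finset.sum_sub_distrib, Finset.sum_add_distrib,
      ← Finset.mul_sum, ← Finset.mul_sum, Finset.sum_const, sum_id, sum_sq,
      Finset.card_range, nsmul_eq_mul]
    ring
  rw [hsum, smul_eq_mul, hDdef]
  have hden : (1 - (2 - d)) * ((1 - (2 - d)) * ((n:ℝ) - 1) + 2)
      = (d-1) * (((n:ℝ)-1)*(d-1)+2) := by ring
  rw [hden]
  field_simp
  ring
end

section
/- Fix b ∈ {1, −1} and real numbers c > 2 and d > 1 with λ = c − d ≠ 0, and for each n ≥ 2 let Q_n be the corresponding n×n tridiagonal matrix (which is invertible). Then (1/n) · trace(Q_n^{-1}) converges, as n → ∞, to 1/κ_0 = 1/√(c² − 4). -/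
namespace TIA

lemma beta_rec (c d : ℝ) (i : ℕ) : beta c d (i + 2) = c * beta c d (i + 1) - beta c d i := rfl
lemma beta_zero (c d : ℝ) : beta c d 0 = 1 := rfl
lemma beta_one (c d : ℝ) : beta c d 1 = d := rfl

lemma beta_ge {c d : ℝ} (hc : 2 < c) (hd : 1 < d) :
    ∀ i, 1 ≤ beta c d i ∧ beta c d i ≤ beta c d (i + 1) := by
  intro i
  induction i with
  | zero => rw [beta_zero, beta_one]; constructor <;> linarith
  | succ k ih =>
    obtain ⟨h1, h2⟩ := ih
    rw [beta_rec]
    constructor <;> nlinarith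

lemma betaF (c d : ℝ) : ∀ a e : ℕ,
    beta c d (a + 1) * beta c d (e + 1) - beta c d a * beta c d e
      = d * beta c d (a + e + 1) - beta c d (a + e) := by
  intro a
  induction a with
  | zero => intro e; rw [beta_zero, beta_one]; simp [Nat.zero_add]
  | succ k ih =>
    intro e
    have h1 : beta c d (k + 2) = c * beta c d (k + 1) - beta c d k := rfl
    have h2 : beta c d (e + 2) = c * beta c d (e + 1) - beta c d e := rfl
    have h3 := ih (e + 1)
    rw [show k + 1 + e + 1 = k + (e + 1) + 1 by omega, show k + 1 + e = k + (e + 1) by omega]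
    rw [show k + 1 + 1 = k + 2 by omega] at *
    rw [show e + 1 + 1 = e + 2 by omega] at *
    linear_combination h3 + beta c d (e + 1) * h1 - beta c d (k + 1) * h2

/-- determinant of Q_n -/
noncomputable def Dn (c d : ℝ) (n : ℕ) : ℝ := d * beta c d (n - 1) - beta c d (n - 2)

lemma Dn_pos {c d : ℝ} (hc : 2 < c) (hd : 1 < d) {n : ℕ} (hn : 2 ≤ n) : 0 < Dn c d n := by
  have h1 := beta_ge hc hd (n - 2)
  rw [show n - 2 + 1 = n - 1 by omega] at h1
  have h2 := (beta_ge hc hd (n - 1)).1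
  unfold Dn
  nlinarith [h1.1, h1.2]

def qe (n : ℕ) (b c d : ℝ) (i j : ℕ) : ℝ :=
  if i = j then (if i = 0 ∨ i = n - 1 then d else c)
  else if i + 1 = j ∨ j + 1 = i then -b else 0

lemma triQ_apply (n : ℕ) (b c d : ℝ) (i j : Fin n) :
    triQ n b c d i j = qe n b c d (i : ℕ) (j : ℕ) := by
  simp only [triQ, qe, Matrix.of_apply, Fin.ext_iff]

noncomputable def me (n : ℕ) (b c d : ℝ) (i j : ℕ) : ℝ :=
  b ^ i * b ^ j * (beta c d (min i j) * beta c d (n - 1 - max i j)) / Dn c d n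

noncomputable def Minv (n : ℕ) (b c d : ℝ) : Matrix (Fin n) (Fin n) ℝ :=
  Matrix.of fun i j => me n b c d (i : ℕ) (j : ℕ)

lemma sum_three (n i : ℕ) (hi : i < n) (f : ℕ → ℝ)
    (h0 : ∀ k, k < n → k + 1 ≠ i → k ≠ i → k ≠ i + 1 → f k = 0) :
    ∑ k ∈ Finset.range n, f k =
      (if 1 ≤ i then f (i - 1) else 0) + f i + (if i + 1 < n then f (i + 1) else 0) := by
  have hsplit : ∑ k ∈ Finset.range n, f k
      = ∑ k ∈ Finset.range n, ((if k + 1 = i then f k else 0)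
        + ((if k = i then f k else 0) + (if k = i + 1 then f k else 0))) := by
    apply Finset.sum_congr rfl
    intro k hk
    rw [Finset.mem_range] at hk
    by_cases h1 : k + 1 = i
    · rw [if_pos h1, if_neg (by omega), if_neg (by omega)]; ring
    · by_cases h2 : k = i
      · rw [if_neg h1, if_pos h2, if_neg (by omega)]; ring
      · by_cases h3 : k = i + 1
        · rw [if_neg h1, if_neg h2, if_pos h3]; ring
        · rw [if_neg h1, if_neg h2, if_neg h3, h0 k hk h1 h2 h3]; ring
  rw [hsplit, Finset.sum_add_distrib, Finset.sum_add_distrib]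
  have hA : ∑ k ∈ Finset.range n, (if k + 1 = i then f k else 0)
      = (if 1 ≤ i then f (i - 1) else 0) := by
    cases i with
    | zero => simp
    | succ m =>
      have : ∀ k, (k + 1 = m + 1) = (k = m) := by intro k; simp
      simp only [this]
      rw [Finset.sum_ite_eq' (Finset.range n) m f]
      rw [if_pos (Finset.mem_range.mpr (by omega)), if_pos (by omega)]
      simp
  have hB : ∑ k ∈ Finset.range n, (if k = i then f k else 0) = f i := by
    rw [Finset.sum_ite_eq' (Finset.range n) i f, if_pos (Finset.mem_range.mpr hi)]
  have hC : ∑ k ∈ Finset.range n, (if k = i + 1 then f k else 0)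
      = (if i + 1 < n then f (i + 1) else 0) := by
    rw [Finset.sum_ite_eq' (Finset.range n) (i + 1) f]
    by_cases h : i + 1 < n
    · rw [if_pos (Finset.mem_range.mpr h), if_pos h]
    · rw [if_neg (by simp [Finset.mem_range]; omega), if_neg h]
  rw [hA, hB, hC]; ring

noncomputable def me1 (n : ℕ) (c d : ℝ) (i j : ℕ) : ℝ :=
  beta c d (min i j) * beta c d (n - 1 - max i j) / Dn c d n

lemma key1 (c d : ℝ) (n : ℕ) (hn : 2 ≤ n) (hD : Dn c d n ≠ 0)
    (i j : ℕ) (hi : i < n) (hj : j < n) :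
    ∑ k ∈ Finset.range n, qe n 1 c d i k * me1 n c d k j = if i = j then 1 else 0 := by
  obtain ⟨m, rfl⟩ : ∃ m, n = m + 2 := ⟨n - 2, by omega⟩
  have hDn : Dn c d (m + 2) = d * beta c d (m + 1) - beta c d m := rfl
  rw [sum_three (m + 2) i hi _ (by
    intro k hk h1 h2 h3
    have : qe (m + 2) 1 c d i k = 0 := by
      unfold qe; rw [if_neg (by omega), if_neg (by omega)]
    rw [this, zero_mul])]
  have hqL : 1 ≤ i → qe (m + 2) 1 c d i (i - 1) = -1 := fun h => by
    unfold qe; rw [if_neg (by omega), if_pos (by omega)]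
  have hqR : qe (m + 2) 1 c d i (i + 1) = -1 := by
    unfold qe; rw [if_neg (by omega), if_pos (by omega)]
  by_cases hij : i = j
  · subst hij
    rw [if_pos rfl]
    by_cases h0 : i = 0
    · subst h0
      rw [if_neg (by omega), if_pos (by omega), hqR]
      have hq : qe (m + 2) 1 c d 0 0 = d := by
        unfold qe; rw [if_pos rfl, if_pos (Or.inl rfl)]
      rw [hq]
      unfold me1 Dn
      rw [show min 0 0 = 0 from by omega, show min (0+1) 0 = 0 from by omega,
        show m + 2 - 1 - max 0 0 = m + 1 from by omega,
        show m + 2 - 1 - max (0+1) 0 = m from by omega,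
        show m + 2 - 1 = m + 1 from by omega, show m + 2 - 2 = m from by omega, beta_zero]
      rw [hDn] at hD
      field_simp
      ring
    · by_cases h1 : i = m + 1
      · subst h1
        rw [if_pos (by omega), if_neg (by omega), hqL (by omega)]
        have hq : qe (m + 2) 1 c d (m + 1) (m + 1) = d := by
          unfold qe; rw [if_pos rfl, if_pos (Or.inr (by omega))]
        rw [hq]
        unfold me1 Dn
        rw [show m + 1 - 1 = m from by omega,
          show min m (m+1) = m from by omega, show min (m+1) (m+1) = m + 1 from by omega,
          show m + 2 - 1 - max m (m+1) = 0 from by omega,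
          show m + 2 - 1 - max (m+1) (m+1) = 0 from by omega,
          show m + 2 - 1 = m + 1 from by omega, show m + 2 - 2 = m from by omega, beta_zero]
        rw [hDn] at hD
        field_simp
        ring
      · obtain ⟨a, rfl⟩ : ∃ a, i = a + 1 := ⟨i - 1, by omega⟩
        obtain ⟨t, rfl⟩ : ∃ t, m = a + t + 1 := ⟨m - a - 1, by omega⟩
        rw [if_pos (by omega), if_pos (by omega), hqL (by omega), hqR]
        have hq : qe (a + t + 1 + 2) 1 c d (a + 1) (a + 1) = c := by
          unfold qe; rw [if_pos rfl, if_neg (by omega)]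
        rw [hq]
        unfold me1 Dn
        rw [show a + 1 - 1 = a from by omega,
          show min a (a+1) = a from by omega,
          show min (a+1) (a+1) = a + 1 from by omega,
          show min (a+1+1) (a+1) = a + 1 from by omega,
          show a + t + 1 + 2 - 1 - max a (a+1) = t + 1 from by omega,
          show a + t + 1 + 2 - 1 - max (a+1) (a+1) = t + 1 from by omega,
          show a + t + 1 + 2 - 1 - max (a+1+1) (a+1) = t from by omega,
          show a + t + 1 + 2 - 1 = a + t + 2 from by omega,
          show a + t + 1 + 2 - 2 = a + t + 1 from by omega]
        have hF := betaF c d (a + 1) t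
        have hrec := beta_rec c d a
        rw [show a + 1 + t + 1 = a + t + 2 from by omega,
          show a + 1 + t = a + t + 1 from by omega,
          show a + 1 + 1 = a + 2 from by omega] at hF
        have hD2 : d * beta c d (a + t + 2) - beta c d (a + t + 1) ≠ 0 := by
          have : Dn c d (a + t + 1 + 2) = d * beta c d (a + t + 2) - beta c d (a + t + 1) := by
            unfold Dn
            rw [show a + t + 1 + 2 - 1 = a + t + 2 from by omega,
              show a + t + 1 + 2 - 2 = a + t + 1 from by omega]
          rwa [this] at hD
        rw [← mul_div_assoc, ← mul_div_assoc, ← mul_div_assoc, ← add_div,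
          ← add_div, div_eq_iff hD2]
        linear_combination hF - beta c d (t + 1) * hrec
  · rw [if_neg hij]
    rcases lt_or_gt_of_ne hij with hlt | hgt
    · -- i < j
      by_cases h0 : i = 0
      · subst h0
        rw [if_neg (by omega), if_pos (by omega), hqR]
        have hq : qe (m + 2) 1 c d 0 0 = d := by
          unfold qe; rw [if_pos rfl, if_pos (Or.inl rfl)]
        rw [hq]
        unfold me1
        rw [min_eq_left (by omega : 0 ≤ j), max_eq_right (by omega : 0 ≤ j),
          min_eq_left (by omega : 1 ≤ j), max_eq_right (by omega : 1 ≤ j),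
          beta_zero, beta_one]
        ring
      · obtain ⟨a, rfl⟩ : ∃ a, i = a + 1 := ⟨i - 1, by omega⟩
        rw [if_pos (by omega), if_pos (by omega), hqL (by omega), hqR]
        have hq : qe (m + 2) 1 c d (a + 1) (a + 1) = c := by
          unfold qe; rw [if_pos rfl, if_neg (by omega)]
        rw [hq]
        unfold me1
        rw [show a + 1 - 1 = a by omega,
          min_eq_left (by omega : a ≤ j), max_eq_right (by omega : a ≤ j),
          min_eq_left (by omega : a + 1 ≤ j), max_eq_right (by omega : a + 1 ≤ j),
          min_eq_left (by omega : a + 2 ≤ j), max_eq_right (by omega : a + 2 ≤ j)]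
        rw [beta_rec c d a]
        ring
    · -- j < i
      by_cases h1 : i = m + 1
      · subst h1
        rw [if_pos (by omega), if_neg (by omega), hqL (by omega)]
        have hq : qe (m + 2) 1 c d (m + 1) (m + 1) = d := by
          unfold qe; rw [if_pos rfl, if_pos (Or.inr (by omega))]
        rw [hq]
        unfold me1
        rw [show m + 1 - 1 = m by omega,
          min_eq_right (by omega : j ≤ m), max_eq_left (by omega : j ≤ m),
          min_eq_right (by omega : j ≤ m + 1), max_eq_left (by omega : j ≤ m + 1)]
        rw [show m + 2 - 1 - m = 1 by omega, show m + 2 - 1 - (m + 1) = 0 by omega,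
          beta_zero, beta_one]
        ring
      · obtain ⟨a, rfl⟩ : ∃ a, i = a + 1 := ⟨i - 1, by omega⟩
        obtain ⟨t, rfl⟩ : ∃ t, m = a + t + 1 := ⟨m - a - 1, by omega⟩
        rw [if_pos (by omega), if_pos (by omega), hqL (by omega), hqR]
        have hq : qe (a + t + 1 + 2) 1 c d (a + 1) (a + 1) = c := by
          unfold qe; rw [if_pos rfl, if_neg (by omega)]
        rw [hq]
        unfold me1
        rw [show a + 1 - 1 = a by omega,
          min_eq_right (by omega : j ≤ a), max_eq_left (by omega : j ≤ a),
          min_eq_right (by omega : j ≤ a + 1), max_eq_left (by omega : j ≤ a + 1),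
          min_eq_right (by omega : j ≤ a + 2), max_eq_left (by omega : j ≤ a + 2)]
        rw [show a + t + 1 + 2 - 1 - a = t + 2 by omega,
          show a + t + 1 + 2 - 1 - (a + 1) = t + 1 by omega,
          show a + t + 1 + 2 - 1 - (a + 2) = t by omega]
        rw [beta_rec c d t]
        ring


noncomputable def Minv1 (n : ℕ) (c d : ℝ) : Matrix (Fin n) (Fin n) ℝ :=
  Matrix.of fun i j => me1 n c d (i : ℕ) (j : ℕ)

lemma mul_one_case (c d : ℝ) (n : ℕ) (hn : 2 ≤ n) (hD : Dn c d n ≠ 0) :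
    triQ n 1 c d * Minv1 n c d = 1 := by
  ext i j
  rw [Matrix.mul_apply]
  calc ∑ k : Fin n, triQ n 1 c d i k * Minv1 n c d k j
      = ∑ k : Fin n, qe n 1 c d (i : ℕ) (k : ℕ) * me1 n c d (k : ℕ) (j : ℕ) := by
        apply Finset.sum_congr rfl; intro k _; rw [triQ_apply]; rfl
    _ = ∑ k ∈ Finset.range n, qe n 1 c d (i : ℕ) k * me1 n c d k (j : ℕ) :=
        Fin.sum_univ_eq_sum_range (fun k => qe n 1 c d (i : ℕ) k * me1 n c d k (j : ℕ)) n
    _ = if (i : ℕ) = (j : ℕ) then 1 else 0 := key1 c d n hn hD (i : ℕ) (j : ℕ) i.isLt j.isLt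
    _ = (1 : Matrix (Fin n) (Fin n) ℝ) i j := by
        rw [Matrix.one_apply]
        by_cases h : i = j
        · rw [if_pos h, if_pos (by rw [h])]
        · rw [if_neg (by simpa [Fin.ext_iff] using h), if_neg h]

noncomputable def Ediag (n : ℕ) (b : ℝ) : Matrix (Fin n) (Fin n) ℝ :=
  Matrix.diagonal fun i => b ^ (i : ℕ)

lemma E_mul_E {b : ℝ} (hb : b * b = 1) (n : ℕ) : Ediag n b * Ediag n b = 1 := by
  unfold Ediag
  rw [Matrix.diagonal_mul_diagonal]
  have : (fun i : Fin n => b ^ (i : ℕ) * b ^ (i : ℕ)) = fun _ => 1 := by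
    funext i; rw [← mul_pow, hb, one_pow]
  rw [this, Matrix.diagonal_one]

lemma triQ_conj {b : ℝ} (hb : b * b = 1) (n : ℕ) (c d : ℝ) :
    triQ n b c d = Ediag n b * triQ n 1 c d * Ediag n b := by
  ext i j
  have hrhs : (Ediag n b * triQ n 1 c d * Ediag n b) i j
      = b ^ (i : ℕ) * triQ n 1 c d i j * b ^ (j : ℕ) := by
    unfold Ediag
    rw [Matrix.mul_diagonal, Matrix.diagonal_mul]
  rw [hrhs]
  have hbk : ∀ k : ℕ, b ^ k * b ^ k = 1 := fun k => by rw [← mul_pow, hb, one_pow]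
  by_cases hij : i = j
  · subst hij
    simp only [triQ, Matrix.of_apply, eq_self_iff_true, if_true]
    set X := if (i : ℕ) = 0 ∨ (i : ℕ) = n - 1 then d else c with hX
    linear_combination (-X) * hbk (i : ℕ)
  · simp only [triQ, Matrix.of_apply, if_neg hij]
    by_cases hadj : (i : ℕ) + 1 = (j : ℕ) ∨ (j : ℕ) + 1 = (i : ℕ)
    · rw [if_pos hadj, if_pos hadj]
      rcases hadj with h | h
      · rw [← h, pow_succ]
        linear_combination b * hbk (i : ℕ)
      · rw [← h, pow_succ]
        linear_combination b * hbk (j : ℕ)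
    · rw [if_neg hadj, if_neg hadj]; ring

lemma mul_eq_one {b : ℝ} (hb : b * b = 1) (c d : ℝ) (n : ℕ) (hn : 2 ≤ n)
    (hD : Dn c d n ≠ 0) :
    triQ n b c d * (Ediag n b * Minv1 n c d * Ediag n b) = 1 := by
  rw [triQ_conj hb n c d]
  have h1 : Ediag n b * triQ n 1 c d * Ediag n b * (Ediag n b * Minv1 n c d * Ediag n b)
      = Ediag n b * (triQ n 1 c d * ((Ediag n b * Ediag n b) * (Minv1 n c d * Ediag n b))) := by
    simp only [Matrix.mul_assoc]
  rw [h1, E_mul_E hb, Matrix.one_mul, ← Matrix.mul_assoc (triQ n 1 c d),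
    mul_one_case c d n hn hD, Matrix.one_mul, E_mul_E hb]

lemma trace_Minv1 (c d : ℝ) (n : ℕ) :
    Matrix.trace (Minv1 n c d)
      = (∑ i ∈ Finset.range n, beta c d i * beta c d (n - 1 - i)) / Dn c d n := by
  have h0 : Matrix.trace (Minv1 n c d) = ∑ k ∈ Finset.range n, me1 n c d k k := by
    rw [← Fin.sum_univ_eq_sum_range (fun k => me1 n c d k k) n]
    rfl
  rw [h0, Finset.sum_div]
  apply Finset.sum_congr rfl
  intro k _
  unfold me1
  rw [min_self, max_self]
noncomputable def kk (c : ℝ) : ℝ := Real.sqrt (c ^ 2 - 4)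
noncomputable def rp (c : ℝ) : ℝ := (c + kk c) / 2
noncomputable def rm (c : ℝ) : ℝ := (c - kk c) / 2
noncomputable def Ac (c d : ℝ) : ℝ := (d - rm c) / kk c
noncomputable def Bc (c d : ℝ) : ℝ := (rp c - d) / kk c

variable {c d : ℝ}

lemma kk_sq (hc : 2 < c) : kk c ^ 2 = c ^ 2 - 4 := Real.sq_sqrt (by nlinarith)
lemma kk_pos (hc : 2 < c) : 0 < kk c := Real.sqrt_pos.mpr (by nlinarith)
lemma kk_lt (hc : 2 < c) : kk c < c := by nlinarith [kk_sq hc, kk_pos hc]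
lemma rm_pos (hc : 2 < c) : 0 < rm c := by unfold rm; nlinarith [kk_lt hc]
lemma rp_gt_one (hc : 2 < c) : 1 < rp c := by unfold rp; nlinarith [kk_pos hc]
lemma rp_pos (hc : 2 < c) : 0 < rp c := lt_trans one_pos (rp_gt_one hc)
lemma prod_eq (hc : 2 < c) : rp c * rm c = 1 := by
  unfold rp rm; linear_combination (-1/4 : ℝ) * kk_sq hc
lemma rm_lt_one (hc : 2 < c) : rm c < 1 := by
  nlinarith [prod_eq hc, rp_gt_one hc, rm_pos hc]
lemma rp_sq (hc : 2 < c) : rp c ^ 2 = c * rp c - 1 := by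
  unfold rp; linear_combination (1/4 : ℝ) * kk_sq hc
lemma rm_sq (hc : 2 < c) : rm c ^ 2 = c * rm c - 1 := by
  unfold rm; linear_combination (1/4 : ℝ) * kk_sq hc
lemma rm_lt_rp (hc : 2 < c) : rm c < rp c := by unfold rp rm; nlinarith [kk_pos hc]

lemma beta_closed (hc : 2 < c) (hd : 1 < d) :
    ∀ i, beta c d i = Ac c d * rp c ^ i + Bc c d * rm c ^ i := by
  have hK := kk_pos hc
  have hKne : kk c ≠ 0 := ne_of_gt hK
  have h0 : beta c d 0 = Ac c d * rp c ^ 0 + Bc c d * rm c ^ 0 := by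
    show (1 : ℝ) = _
    unfold Ac Bc rp rm
    field_simp
    ring
  have h1 : beta c d 1 = Ac c d * rp c ^ 1 + Bc c d * rm c ^ 1 := by
    show d = _
    unfold Ac Bc rp rm
    field_simp
    ring
  have main : ∀ i, beta c d i = Ac c d * rp c ^ i + Bc c d * rm c ^ i ∧
      beta c d (i + 1) = Ac c d * rp c ^ (i + 1) + Bc c d * rm c ^ (i + 1) := by
    intro i
    induction i with
    | zero => exact ⟨h0, h1⟩
    | succ k ih =>
      refine ⟨ih.2, ?_⟩
      have hrec : beta c d (k + 2) = c * beta c d (k + 1) - beta c d k := rfl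
      rw [hrec, ih.1, ih.2]
      linear_combination (-(Ac c d * rp c ^ k)) * rp_sq hc + (-(Bc c d * rm c ^ k)) * rm_sq hc
  exact fun i => (main i).1

lemma Dn_rp (hc : 2 < c) (hd : 1 < d) {n : ℕ} (hn : 2 ≤ n) :
    Dn c d n = rp c ^ (n - 1) *
      (((d - rm c) ^ 2 - (d - rp c) ^ 2 * (rm c / rp c) ^ (n - 1)) / kk c) := by
  have hKne : kk c ≠ 0 := ne_of_gt (kk_pos hc)
  have hrpne : rp c ≠ 0 := ne_of_gt (rp_pos hc)
  obtain ⟨m, rfl⟩ : ∃ m, n = m + 2 := ⟨n - 2, by omega⟩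
  have hDn : Dn c d (m + 2) = d * beta c d (m + 1) - beta c d m := rfl
  rw [hDn, beta_closed hc hd (m + 1), beta_closed hc hd m,
    show m + 2 - 1 = m + 1 from by omega]
  have hcanc : rp c ^ (m + 1) * (rm c / rp c) ^ (m + 1) = rm c ^ (m + 1) := by
    rw [div_pow]
    field_simp
  rw [mul_div_assoc', mul_sub,
    show rp c ^ (m+1) * ((d - rp c) ^ 2 * (rm c / rp c) ^ (m+1))
      = (d - rp c) ^ 2 * (rp c ^ (m+1) * (rm c / rp c) ^ (m+1)) from by ring, hcanc]
  have hA : rp c ^ m = rp c ^ (m + 1) * rm c := by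
    rw [pow_succ, mul_assoc, prod_eq hc, mul_one]
  have hB : rm c ^ m = rm c ^ (m + 1) * rp c := by
    rw [pow_succ, mul_assoc, mul_comm (rm c) (rp c), prod_eq hc, mul_one]
  rw [hA, hB]
  unfold Ac Bc
  field_simp
  ring

lemma sum_beta (hc : 2 < c) (hd : 1 < d) (n : ℕ) :
    ∑ i ∈ Finset.range n, beta c d i * beta c d (n - 1 - i)
      = n * (Ac c d ^ 2 * rp c ^ (n - 1) + Bc c d ^ 2 * rm c ^ (n - 1))
        + Ac c d * Bc c d * rp c ^ (n - 1) *
          (2 * ∑ m ∈ Finset.range n, (rm c / rp c) ^ m) := by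
  have hrpne : rp c ≠ 0 := ne_of_gt (rp_pos hc)
  have hpt : ∀ i ∈ Finset.range n, beta c d i * beta c d (n - 1 - i)
      = (Ac c d ^ 2 * rp c ^ (n - 1) + Bc c d ^ 2 * rm c ^ (n - 1))
        + Ac c d * Bc c d * rp c ^ (n - 1) *
          ((rm c / rp c) ^ (n - 1 - i) + (rm c / rp c) ^ i) := by
    intro i hi
    rw [Finset.mem_range] at hi
    rw [beta_closed hc hd i, beta_closed hc hd (n - 1 - i)]
    have e1 : rp c ^ i * rp c ^ (n - 1 - i) = rp c ^ (n - 1) := by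
      rw [← pow_add]; congr 1; omega
    have e2 : rm c ^ i * rm c ^ (n - 1 - i) = rm c ^ (n - 1) := by
      rw [← pow_add]; congr 1; omega
    have e3 : rp c ^ (n - 1) * (rm c / rp c) ^ (n - 1 - i) = rp c ^ i * rm c ^ (n - 1 - i) := by
      rw [div_pow, ← e1]
      field_simp
    have e4 : rp c ^ (n - 1) * (rm c / rp c) ^ i = rm c ^ i * rp c ^ (n - 1 - i) := by
      rw [div_pow, ← e1]
      field_simp
    rw [mul_add (Ac c d * Bc c d * rp c ^ (n - 1))]
    rw [show Ac c d * Bc c d * rp c ^ (n-1) * (rm c / rp c) ^ (n-1-i)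
        = Ac c d * Bc c d * (rp c ^ (n-1) * (rm c / rp c) ^ (n-1-i)) from by ring, e3]
    rw [show Ac c d * Bc c d * rp c ^ (n-1) * (rm c / rp c) ^ i
        = Ac c d * Bc c d * (rp c ^ (n-1) * (rm c / rp c) ^ i) from by ring, e4]
    linear_combination Ac c d ^ 2 * e1 + Bc c d ^ 2 * e2
  rw [Finset.sum_congr rfl hpt, Finset.sum_add_distrib, Finset.sum_const, Finset.card_range,
    ← Finset.mul_sum, Finset.sum_add_distrib, Finset.sum_range_reflect (fun i => (rm c / rp c) ^ i) n]
  push_cast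
  ring

open Filter in
lemma tendsto_ratio (hc : 2 < c) (hd : 1 < d) :
    Filter.Tendsto (fun n : ℕ =>
      (∑ i ∈ Finset.range n, beta c d i * beta c d (n - 1 - i)) / (n * Dn c d n))
      Filter.atTop (nhds (1 / Real.sqrt (c ^ 2 - 4))) := by
  have hK := kk_pos hc
  have hKne : kk c ≠ 0 := ne_of_gt hK
  have hrp := rp_pos hc
  have hrpne : rp c ≠ 0 := ne_of_gt hrp
  set s : ℝ := rm c / rp c with hs
  have hs0 : 0 ≤ s := le_of_lt (div_pos (rm_pos hc) hrp)
  have hs1 : s < 1 := by rw [hs, div_lt_one hrp]; exact rm_lt_rp hc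
  set A := Ac c d with hA
  set B := Bc c d with hB
  set Num : ℕ → ℝ := fun n =>
    A ^ 2 + B ^ 2 * s ^ (n - 1) + A * B * 2 * (∑ m ∈ Finset.range n, s ^ m) * ((n : ℝ))⁻¹
    with hNum
  set Den : ℕ → ℝ := fun n =>
    ((d - rm c) ^ 2 - (d - rp c) ^ 2 * s ^ (n - 1)) / kk c with hDen
  have heq : ∀ᶠ n : ℕ in Filter.atTop, Num n / Den n
      = (∑ i ∈ Finset.range n, beta c d i * beta c d (n - 1 - i)) / (n * Dn c d n) := by
    filter_upwards [Filter.eventually_ge_atTop 2] with n hn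
    have hnne : (n : ℝ) ≠ 0 := Nat.cast_ne_zero.mpr (by omega)
    have hT : (∑ i ∈ Finset.range n, beta c d i * beta c d (n - 1 - i))
        = ((n : ℝ) * rp c ^ (n - 1)) * Num n := by
      rw [sum_beta hc hd n, hNum, ← hs]
      have hrs : rm c ^ (n - 1) = rp c ^ (n - 1) * s ^ (n - 1) := by
        rw [hs, div_pow]
        field_simp
      rw [hrs]
      field_simp
      ring
    have hD : (n : ℝ) * Dn c d n = ((n : ℝ) * rp c ^ (n - 1)) * Den n := by
      rw [Dn_rp hc hd hn, hDen, ← hs]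
      ring
    rw [hT, hD, mul_div_mul_left _ _ (mul_ne_zero hnne (pow_ne_zero _ hrpne))]
  have hsn : Filter.Tendsto (fun n : ℕ => s ^ (n - 1)) Filter.atTop (nhds 0) :=
    (tendsto_pow_atTop_nhds_zero_of_lt_one hs0 hs1).comp (tendsto_sub_atTop_nat 1)
  have hG : Filter.Tendsto (fun n : ℕ => ∑ m ∈ Finset.range n, s ^ m)
      Filter.atTop (nhds (1 - s)⁻¹) :=
    (hasSum_geometric_of_lt_one hs0 hs1).tendsto_sum_nat
  have hinv : Filter.Tendsto (fun n : ℕ => ((n : ℝ))⁻¹) Filter.atTop (nhds 0) := by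
    simpa using (tendsto_one_div_atTop_nhds_zero_nat :
      Filter.Tendsto (fun n : ℕ => 1 / (n : ℝ)) Filter.atTop (nhds 0))
  have h2 : Filter.Tendsto (fun n : ℕ =>
      A * B * 2 * (∑ m ∈ Finset.range n, s ^ m) * ((n : ℝ))⁻¹) Filter.atTop (nhds 0) := by
    have := ((tendsto_const_nhds (x := A * B * 2)).mul hG).mul hinv
    simpa using this
  have hNumT : Filter.Tendsto Num Filter.atTop (nhds (A ^ 2)) := by
    have := ((tendsto_const_nhds (x := A ^ 2)).add
      ((tendsto_const_nhds (x := B ^ 2)).mul hsn)).add h2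
    simpa using this
  have hDenT : Filter.Tendsto Den Filter.atTop (nhds ((d - rm c) ^ 2 / kk c)) := by
    have := ((tendsto_const_nhds (x := (d - rm c) ^ 2)).sub
      ((tendsto_const_nhds (x := (d - rp c) ^ 2)).mul hsn)).div_const (kk c)
    simpa using this
  have hdrm : 0 < d - rm c := by nlinarith [rm_lt_one hc]
  have hlim_ne : (d - rm c) ^ 2 / kk c ≠ 0 := by positivity
  have final := hNumT.div hDenT hlim_ne
  have hval : A ^ 2 / ((d - rm c) ^ 2 / kk c) = 1 / Real.sqrt (c ^ 2 - 4) := by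
    rw [hA]
    unfold Ac
    rw [show Real.sqrt (c ^ 2 - 4) = kk c from rfl]
    field_simp
  rw [← hval]
  exact Filter.Tendsto.congr' heq final


lemma Dn_ne {c d : ℝ} (hc : 2 < c) (hd : 1 < d) {n : ℕ} (hn : 2 ≤ n) : Dn c d n ≠ 0 :=
  ne_of_gt (Dn_pos hc hd hn)

end TIA


/-- Corollary: for c > 2, d > 1 (λ ≠ 0), each Qₙ is invertible
and n⁻¹ tr(Qₙ⁻¹) → 1/κ₀ = 1/√(c² − 4) as n → ∞. -/
theorem trace_inv_limit (b c d : ℝ) (hb : b = 1 ∨ b = -1) (hc : 2 < c) (hd : 1 < d)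
    (hlam : c - d ≠ 0) :
    (∀ n : ℕ, 2 ≤ n → IsUnit (triQ n b c d)) ∧
    Filter.Tendsto (fun n : ℕ => (1 / (n : ℝ)) * Matrix.trace (triQ n b c d)⁻¹)
      Filter.atTop (nhds (1 / Real.sqrt (c ^ 2 - 4))) := by
  have hb2 : b * b = 1 := by rcases hb with rfl | rfl <;> norm_num
  have hmul : ∀ n : ℕ, 2 ≤ n →
      triQ n b c d * (TIA.Ediag n b * TIA.Minv1 n c d * TIA.Ediag n b) = 1 :=
    fun n hn => TIA.mul_eq_one hb2 c d n hn (TIA.Dn_ne hc hd hn)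
  constructor
  · exact fun n hn => (Matrix.isUnit_iff_isUnit_det _).mpr
      (Matrix.isUnit_det_of_right_inverse (hmul n hn))
  · have heq : ∀ᶠ n : ℕ in Filter.atTop,
        (∑ i ∈ Finset.range n, beta c d i * beta c d (n - 1 - i)) / (n * TIA.Dn c d n)
          = (1 / (n : ℝ)) * Matrix.trace (triQ n b c d)⁻¹ := by
      filter_upwards [Filter.eventually_ge_atTop 2] with n hn
      rw [Matrix.inv_eq_right_inv (hmul n hn)]
      have htr : Matrix.trace (TIA.Ediag n b * TIA.Minv1 n c d * TIA.Ediag n b)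
          = Matrix.trace (TIA.Minv1 n c d) := by
        rw [Matrix.trace_mul_comm, ← Matrix.mul_assoc, TIA.E_mul_E hb2, Matrix.one_mul]
      rw [htr, TIA.trace_Minv1]
      ring
    exact Filter.Tendsto.congr' heq (TIA.tendsto_ratio hc hd)
end

section
/- Fix b ∈ {1, −1} and real numbers c > 2 and d > 1 with λ = c − d ≠ 0, and for each n ≥ 2 let Q_n be the corresponding n×n tridiagonal matrix (which is invertible). Then (1/n²) · trace(Q_n^{-2}) converges to 0 as n → ∞. -/
lemma triQ_herm (n : ℕ) (b c d : ℝ) : (triQ n b c d).IsHermitian := by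
  ext i j
  simp only [triQ, Matrix.conjTranspose_apply, Matrix.of_apply, star_trivial]
  by_cases h : j = i
  · subst h; rfl
  · rw [if_neg h, if_neg (Ne.symm h)]
    exact if_congr or_comm rfl rfl

lemma eig_lb {n : ℕ} (hn : 2 ≤ n) {b c d : ℝ} (hb : b = 1 ∨ b = -1)
    (hH : (triQ n b c d).IsHermitian) (i : Fin n) :
    min (d - 1) (c - 2) ≤ hH.eigenvalues i := by
  set A := triQ n b c d with hA
  set μ := hH.eigenvalues i with hμ
  have habs : |b| = 1 := by rcases hb with h | h <;> simp [h]
  have hev : Module.End.HasEigenvalue (Matrix.toLin' A) μ := by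
    apply Module.End.hasEigenvalue_of_hasEigenvector (x := ⇑(hH.eigenvectorBasis i))
    constructor
    · rw [Module.End.mem_eigenspace_iff]
      rw [Matrix.toLin'_apply]
      exact hH.mulVec_eigenvectorBasis i
    · intro h
      apply hH.eigenvectorBasis.orthonormal.ne_zero i
      ext j
      exact congrFun h j
  obtain ⟨k, hk⟩ := eigenvalue_mem_ball hev
  rw [Metric.mem_closedBall, Real.dist_eq, abs_sub_le_iff] at hk
  have hlow : A k k - ∑ j ∈ Finset.univ.erase k, ‖A k j‖ ≤ μ := by
    linarith [hk.2]
  -- bound pieces of the off-diagonal row sum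
  have hcard1 : ((Finset.univ.filter (fun j : Fin n => (k : ℕ) + 1 = (j : ℕ))).card : ℝ) ≤ 1 := by
    norm_cast
    apply Finset.card_le_one.2
    intro a ha b' hb'
    simp only [Finset.mem_filter] at ha hb'
    exact Fin.ext (ha.2.symm.trans hb'.2)
  have hcard2 : ((Finset.univ.filter (fun j : Fin n => (j : ℕ) + 1 = (k : ℕ))).card : ℝ) ≤ 1 := by
    norm_cast
    apply Finset.card_le_one.2
    intro a ha b' hb'
    simp only [Finset.mem_filter] at ha hb'
    exact Fin.ext (Nat.succ_injective (ha.2.trans hb'.2.symm))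
  set g : Fin n → ℝ := fun j =>
    (if (k : ℕ) + 1 = (j : ℕ) then 1 else 0) + (if (j : ℕ) + 1 = (k : ℕ) then 1 else 0) with hg
  have hgsum : ∑ j, g j =
      ((Finset.univ.filter (fun j : Fin n => (k : ℕ) + 1 = (j : ℕ))).card : ℝ) +
      ((Finset.univ.filter (fun j : Fin n => (j : ℕ) + 1 = (k : ℕ))).card : ℝ) := by
    rw [Finset.sum_add_distrib, Finset.sum_boole, Finset.sum_boole]
  have hgnonneg : ∀ j, 0 ≤ g j := by
    intro j; rw [hg]; positivity
  have hSg : ∑ j ∈ Finset.univ.erase k, ‖A k j‖ ≤ ∑ j, g j := by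
    refine le_trans (Finset.sum_le_sum ?_)
      (Finset.sum_le_sum_of_subset_of_nonneg (Finset.subset_univ _) (fun j _ _ => hgnonneg j))
    intro j hj
    have hjk : ¬ (k = j) := fun h => (Finset.mem_erase.1 hj).1 h.symm
    have : A k j = if (k : ℕ) + 1 = (j : ℕ) ∨ (j : ℕ) + 1 = (k : ℕ) then -b else 0 := by
      simp [hA, triQ, hjk]
    rw [this]
    by_cases hc' : (k : ℕ) + 1 = (j : ℕ) ∨ (j : ℕ) + 1 = (k : ℕ)
    · rw [if_pos hc', Real.norm_eq_abs, abs_neg, habs, hg]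
      rcases hc' with h1 | h2
      · simp only [if_pos h1]
        have : (0:ℝ) ≤ if (j : ℕ) + 1 = (k : ℕ) then 1 else 0 := by positivity
        linarith
      · simp only [if_pos h2]
        have : (0:ℝ) ≤ if (k : ℕ) + 1 = (j : ℕ) then 1 else 0 := by positivity
        linarith
    · rw [if_neg hc', norm_zero]; exact hgnonneg j
  by_cases hk0 : (k : ℕ) = 0 ∨ (k : ℕ) = n - 1
  · -- endpoint: diagonal is d, row sum ≤ 1
    have hAkk : A k k = d := by simp [hA, triQ, hk0]
    have hS1 : ∑ j, g j ≤ 1 := by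
      rcases hk0 with h0 | hlast
      · have : ((Finset.univ.filter (fun j : Fin n => (j : ℕ) + 1 = (k : ℕ))).card : ℝ) = 0 := by
          norm_cast
          rw [Finset.card_eq_zero]
          ext j; simp [h0]
        rw [hgsum, this, add_zero]; exact hcard1
      · have : ((Finset.univ.filter (fun j : Fin n => (k : ℕ) + 1 = (j : ℕ))).card : ℝ) = 0 := by
          norm_cast
          rw [Finset.card_eq_zero]
          ext j
          simp only [Finset.mem_filter, Finset.mem_univ, true_and, Finset.notMem_empty,
            iff_false]
          intro h
          have hjn : (j : ℕ) < n := j.isLt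
          omega
        rw [hgsum, this, zero_add]; exact hcard2
    have : d - 1 ≤ μ := by
      have := hSg.trans hS1
      linarith [hlow, hAkk ▸ hlow]
    exact le_trans (min_le_left _ _) this
  · have hAkk : A k k = c := by simp [hA, triQ, hk0]
    have hS2 : ∑ j, g j ≤ 2 := by rw [hgsum]; linarith
    have : c - 2 ≤ μ := by
      have := hSg.trans hS2
      linarith [hAkk ▸ hlow]
    exact le_trans (min_le_right _ _) this

/-- Corollary: for c > 2, d > 1 (λ ≠ 0), each Qₙ is invertible
and n⁻² tr(Qₙ⁻²) → 0 as n → ∞. -/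
theorem trace_inv_sq_limit (b c d : ℝ) (hb : b = 1 ∨ b = -1) (hc : 2 < c) (hd : 1 < d)
    (hlam : c - d ≠ 0) :
    (∀ n : ℕ, 2 ≤ n → IsUnit (triQ n b c d)) ∧
    Filter.Tendsto
      (fun n : ℕ => (1 / (n : ℝ) ^ 2) * Matrix.trace ((triQ n b c d)⁻¹ ^ 2))
      Filter.atTop (nhds 0) := by
  set δ := min (d - 1) (c - 2) with hδdef
  have hδ : 0 < δ := lt_min (by linarith) (by linarith)
  -- key facts for each n ≥ 2
  have key : ∀ n : ℕ, 2 ≤ n → IsUnit (triQ n b c d) ∧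
      0 ≤ Matrix.trace ((triQ n b c d)⁻¹ ^ 2) ∧
      Matrix.trace ((triQ n b c d)⁻¹ ^ 2) ≤ (n : ℝ) * (δ⁻¹ * δ⁻¹) := by
    intro n hn
    have hH := triQ_herm n b c d
    set E := hH.eigenvalues with hE
    have hEδ : ∀ i, δ ≤ E i := fun i => eig_lb hn hb hH i
    have hEpos : ∀ i, 0 < E i := fun i => lt_of_lt_of_le hδ (hEδ i)
    set U : Matrix (Fin n) (Fin n) ℝ := (hH.eigenvectorUnitary : Matrix (Fin n) (Fin n) ℝ)
      with hU
    have h1 : U * star U = 1 := Matrix.mem_unitaryGroup_iff.mp hH.eigenvectorUnitary.2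
    have h2 : star U * U = 1 := Matrix.mem_unitaryGroup_iff'.mp hH.eigenvectorUnitary.2
    have hdiag : (RCLike.ofReal ∘ E : Fin n → ℝ) = E := by
      funext i; simp
    have hspec : triQ n b c d = U * Matrix.diagonal E * star U := by
      have := hH.spectral_theorem
      rwa [hdiag] at this
    have hunit : IsUnit (triQ n b c d) := by
      rw [Matrix.isUnit_iff_isUnit_det, isUnit_iff_ne_zero]
      have : (triQ n b c d).det = ∏ i, (E i : ℝ) := by
        simpa using hH.det_eq_prod_eigenvalues
      rw [this]
      exact ne_of_gt (Finset.prod_pos fun i _ => hEpos i)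
    have hinv : (triQ n b c d)⁻¹ = U * Matrix.diagonal (fun i => (E i)⁻¹) * star U := by
      apply Matrix.inv_eq_right_inv
      rw [hspec]
      calc U * Matrix.diagonal E * star U * (U * Matrix.diagonal (fun i => (E i)⁻¹) * star U)
          = U * Matrix.diagonal E * (star U * U) * Matrix.diagonal (fun i => (E i)⁻¹) * star U
            := by simp only [Matrix.mul_assoc]
        _ = U * (Matrix.diagonal E * Matrix.diagonal (fun i => (E i)⁻¹)) * star U := by
            rw [h2]; simp only [Matrix.mul_assoc, Matrix.mul_one, Matrix.one_mul]
        _ = U * star U := by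
            rw [Matrix.diagonal_mul_diagonal]
            have : (fun i => E i * (E i)⁻¹) = fun _ : Fin n => (1:ℝ) := by
              funext i; exact mul_inv_cancel₀ (ne_of_gt (hEpos i))
            rw [this, Matrix.diagonal_one, Matrix.mul_one]
        _ = 1 := h1
    have htr : Matrix.trace ((triQ n b c d)⁻¹ ^ 2) = ∑ i, (E i)⁻¹ * (E i)⁻¹ := by
      rw [sq, hinv]
      have hmul : U * Matrix.diagonal (fun i => (E i)⁻¹) * star U *
            (U * Matrix.diagonal (fun i => (E i)⁻¹) * star U)
          = U * Matrix.diagonal (fun i => (E i)⁻¹ * (E i)⁻¹) * star U := by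
        calc U * Matrix.diagonal (fun i => (E i)⁻¹) * star U *
              (U * Matrix.diagonal (fun i => (E i)⁻¹) * star U)
            = U * Matrix.diagonal (fun i => (E i)⁻¹) * (star U * U) *
              Matrix.diagonal (fun i => (E i)⁻¹) * star U := by simp only [Matrix.mul_assoc]
          _ = U * (Matrix.diagonal (fun i => (E i)⁻¹) * Matrix.diagonal (fun i => (E i)⁻¹)) *
              star U := by rw [h2]; simp only [Matrix.mul_assoc, Matrix.mul_one, Matrix.one_mul]
          _ = _ := by rw [Matrix.diagonal_mul_diagonal]
      rw [hmul, Matrix.trace_mul_cycle, h2, Matrix.one_mul, Matrix.trace_diagonal]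
    refine ⟨hunit, ?_, ?_⟩
    · rw [htr]
      exact Finset.sum_nonneg fun i _ => mul_self_nonneg _
    · rw [htr]
      calc ∑ i, (E i)⁻¹ * (E i)⁻¹ ≤ ∑ _i : Fin n, δ⁻¹ * δ⁻¹ := by
            apply Finset.sum_le_sum
            intro i _
            have h1' : (E i)⁻¹ ≤ δ⁻¹ := inv_anti₀ hδ (hEδ i)
            have h2' : 0 ≤ (E i)⁻¹ := le_of_lt (inv_pos.2 (hEpos i))
            exact mul_le_mul h1' h1' h2' (le_of_lt (inv_pos.2 hδ))
        _ = (n : ℝ) * (δ⁻¹ * δ⁻¹) := by simp [Finset.sum_const, mul_comm]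
  refine ⟨fun n hn => (key n hn).1, ?_⟩
  apply squeeze_zero' (g := fun n : ℕ => (δ⁻¹ * δ⁻¹) / n)
  · filter_upwards [Filter.eventually_atTop.2 ⟨2, fun n hn => hn⟩] with n hn
    have hpos : (0:ℝ) ≤ 1 / (n : ℝ) ^ 2 := by positivity
    exact mul_nonneg hpos (key n hn).2.1
  · filter_upwards [Filter.eventually_atTop.2 ⟨2, fun n hn => hn⟩] with n hn
    have hn0 : (0:ℝ) < (n : ℝ) := by exact_mod_cast Nat.lt_of_lt_of_le (by norm_num) hn
    have := (key n hn).2.2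
    have hb' : (1 / (n : ℝ) ^ 2) * Matrix.trace ((triQ n b c d)⁻¹ ^ 2)
        ≤ (1 / (n : ℝ) ^ 2) * ((n : ℝ) * (δ⁻¹ * δ⁻¹)) := by
      apply mul_le_mul_of_nonneg_left this (by positivity)
    refine hb'.trans (le_of_eq ?_)
    field_simp
  · exact tendsto_const_div_atTop_nhds_zero_nat _
end

section
/- Let n ≥ 2, let φ be real with 0 < |φ| < 1 and γ > 0, and set b = φ/|φ|, c = (1+γ+φ²)/|φ|, d = (1+γ)/|φ|, λ = |φ|. Then d β_{n−1} − β_{n−2} ≠ 0, and for every i = 1, …, n, |v_i + v_{n−i+1}| < 2/(d − λ). -/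
lemma beta_key (c d lam : ℝ) (hl0 : 0 < lam) (hl1 : lam < 1)
    (hld : 1 < lam * d) (hcd : c = d + lam) :
    ∀ i, 0 < beta c d i ∧ beta c d i < lam * beta c d (i + 1) := by
  intro i
  induction i with
  | zero =>
    constructor
    · simp [beta]
    · simpa [beta] using hld
  | succ i ih =>
    obtain ⟨h0, h1⟩ := ih
    have hpos : 0 < beta c d (i + 1) := by
      nlinarith
    refine ⟨hpos, ?_⟩
    show beta c d (i + 1) < lam * beta c d (i + 1 + 1)
    subst hcd
    have h2 : beta (d + lam) d (i + 1 + 1)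
        = (d + lam) * beta (d + lam) d (i + 1) - beta (d + lam) d i := rfl
    rw [h2]
    nlinarith [mul_lt_mul_of_pos_left h1 hl0, mul_pos hl0 hpos]

lemma beta_mono (c d lam : ℝ) (hl0 : 0 < lam) (hl1 : lam < 1)
    (hld : 1 < lam * d) (hcd : c = d + lam) :
    Monotone (beta c d) := by
  apply monotone_nat_of_le_succ
  intro i
  obtain ⟨h0, h1⟩ := beta_key c d lam hl0 hl1 hld hcd i
  have hpos : 0 < beta c d (i + 1) := by nlinarith
  nlinarith

/-- Lemma: in the AR(1)-plus-noise setting with 0 < |φ| < 1 and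
γ > 0 (so b = φ/|φ|, c = (1+γ+φ²)/|φ|, d = (1+γ)/|φ|, λ = |φ|), one has
d β_{n−1} − β_{n−2} ≠ 0 and |vᵢ + v_{n−i+1}| < 2/(d − λ) for i = 1, …, n,
where vᵢ = b^{i−1} β_{n−i} / (d β_{n−1} − β_{n−2}). -/
theorem abs_v_add_v_lt (n : ℕ) (hn : 2 ≤ n) (φ γ : ℝ)
    (hφ0 : 0 < |φ|) (hφ1 : |φ| < 1) (hγ : 0 < γ) :
    let b : ℝ := φ / |φ|
    let c : ℝ := (1 + γ + φ ^ 2) / |φ|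
    let d : ℝ := (1 + γ) / |φ|
    let lam : ℝ := |φ|
    let D : ℝ := d * beta c d (n - 1) - beta c d (n - 2)
    D ≠ 0 ∧
    ∀ i : ℕ, 1 ≤ i → i ≤ n →
      |b ^ (i - 1) * beta c d (n - i) / D
          + b ^ (n - i + 1 - 1) * beta c d (n - (n - i + 1)) / D| < 2 / (d - lam) := by
  intro b c d lam D
  have hne : |φ| ≠ 0 := ne_of_gt hφ0
  have hsq : |φ| * |φ| = φ ^ 2 := by
    rw [← sq_abs, sq]
  have hcd : c = d + lam := by
    show (1 + γ + φ ^ 2) / |φ| = (1 + γ) / |φ| + |φ|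
    field_simp
    linarith [hsq]
  have hld : 1 < lam * d := by
    show 1 < |φ| * ((1 + γ) / |φ|)
    rw [mul_div_cancel₀ _ hne]
    linarith
  have key := beta_key c d lam hφ0 hφ1 hld hcd
  have mono := beta_mono c d lam hφ0 hφ1 hld hcd
  have hdl : lam < d := by
    nlinarith
  -- D > 0
  have hn1 : n - 1 = (n - 2) + 1 := by omega
  have hkey2 := key (n - 2)
  rw [← hn1] at hkey2
  obtain ⟨hb2pos, hb2lt⟩ := hkey2
  have hb1pos : 0 < beta c d (n - 1) := (key (n - 1)).1
  have hDpos : 0 < D := by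
    show 0 < d * beta c d (n - 1) - beta c d (n - 2)
    nlinarith
  refine ⟨ne_of_gt hDpos, ?_⟩
  intro i hi1 hin
  have habsb : |b| = 1 := by
    show abs (φ / |φ|) = 1
    rw [abs_div, abs_abs, div_self hne]
  have hidx : n - (n - i + 1) = i - 1 := by omega
  rw [hidx]
  have hβ1pos : 0 < beta c d (n - i) := (key _).1
  have hβ2pos : 0 < beta c d (i - 1) := (key _).1
  have hβ1le : beta c d (n - i) ≤ beta c d (n - 1) := mono (by omega)
  have hβ2le : beta c d (i - 1) ≤ beta c d (n - 1) := mono (by omega)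
  have habs : |b ^ (i - 1) * beta c d (n - i) / D
      + b ^ (n - i + 1 - 1) * beta c d (i - 1) / D|
      ≤ (beta c d (n - i) + beta c d (i - 1)) / D := by
    refine (abs_add_le _ _).trans ?_
    rw [abs_div, abs_div, abs_mul, abs_mul, abs_pow, abs_pow, habsb,
      one_pow, one_pow, one_mul, one_mul, abs_of_pos hDpos,
      abs_of_pos hβ1pos, abs_of_pos hβ2pos, ← add_div]
  refine habs.trans_lt ?_
  rw [div_lt_div_iff₀ hDpos (by linarith : (0:ℝ) < d - lam)]
  show (beta c d (n - i) + beta c d (i - 1)) * (d - lam)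
      < 2 * (d * beta c d (n - 1) - beta c d (n - 2))
  nlinarith
end
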